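/- arXiv:2605.02282 — 11 statements merged into one kernel-verified Lean document; each statement's English description precedes it below -/
import Mathlib

section
/- For all real numbers θ₀, θ_c with 0 < θ₀ < θ_c and every δ ∈ (0,1), the regularized potential f₂^δ is twice continuously differentiable on all of ℝ (i.e. f₂^δ is C² on ℝ). -/
open Real Set

/-- The singular logarithmic (Flory–Huggins) entropy term
`f₂(c) = (θ₀/2)((1+c)log(1+c) + (1−c)log(1−c))`. -/
noncomputable def f2 (θ₀ c : ℝ) : ℝ :=
  θ₀ / 2 * ((1 + c) * Real.log (1 + c) + (1 - c) * Real.log (1 - c))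

/-- The regularized potential `f₂^δ` for nonnegative arguments. -/
noncomputable def f2deltaAux (θ₀ θc δ c : ℝ) : ℝ :=
  if c ≤ 1 - δ then f2 θ₀ c
  else if c ≤ 1 then
    θ₀ / (2 * δ * (2 - δ)) * (c - 1 + δ) ^ 2
      + θ₀ / 2 * Real.log (2 / δ - 1) * (c - 1 + δ) + f2 θ₀ (1 - δ)
  else if c ≤ 1 + δ then
    (θc * δ * (2 - δ) - θ₀) / (6 * δ ^ 2 * (2 - δ)) * (c - 1) ^ 3
      + θ₀ / (2 * δ * (2 - δ)) * (c - 1) ^ 2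
      + (θ₀ / (2 - δ) + θ₀ / 2 * Real.log ((2 - δ) / δ)) * (c - 1)
      + δ * θ₀ / (2 * (2 - δ)) + θ₀ * Real.log (2 - δ)
  else
    θc / 2 * (c - 1 - δ) ^ 2
      + (θc * δ / 2 + 3 * θ₀ / (2 * (2 - δ)) + θ₀ / 2 * Real.log ((2 - δ) / δ))
          * (c - 1 - δ)
      + θc * δ ^ 2 / 6 + 11 * θ₀ * δ / (6 * (2 - δ))
      + θ₀ * δ / 2 * Real.log ((2 - δ) / δ) + θ₀ * Real.log (2 - δ)

/-- The regularized potential `f₂^δ`, extended to an even function on all of `ℝ`. -/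
noncomputable def f2delta (θ₀ θc δ c : ℝ) : ℝ := f2deltaAux θ₀ θc δ |c|

/-- The explicit piecewise function `g^δ` (the derivative of `f₂^δ` for `c ≥ 0`). -/
noncomputable def gdeltaAux (θ₀ θc δ c : ℝ) : ℝ :=
  if c ≤ 1 - δ then θ₀ / 2 * Real.log ((1 + c) / (1 - c))
  else if c ≤ 1 then θ₀ / (δ * (2 - δ)) * (c - 1 + δ) + θ₀ / 2 * Real.log ((2 - δ) / δ)
  else if c ≤ 1 + δ then
    (θc * δ * (2 - δ) - θ₀) / (2 * δ ^ 2 * (2 - δ)) * (c - 1) ^ 2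
      + θ₀ / (δ * (2 - δ)) * (c - 1) + θ₀ / (2 - δ) + θ₀ / 2 * Real.log ((2 - δ) / δ)
  else θc * (c - 1 - δ) + θc * δ / 2 + 3 * θ₀ / (2 * (2 - δ))
      + θ₀ / 2 * Real.log ((2 - δ) / δ)

/-- The odd extension `g̃^δ` of `g^δ` to all of `ℝ`. -/
noncomputable def gdelta (θ₀ θc δ c : ℝ) : ℝ :=
  if 0 ≤ c then gdeltaAux θ₀ θc δ c else -gdeltaAux θ₀ θc δ (-c)

/-- The explicit piecewise function `h^δ` (the second derivative of `f₂^δ`) for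
positive arguments. -/
noncomputable def hdeltaAux (θ₀ θc δ c : ℝ) : ℝ :=
  if c ≤ 1 - δ then θ₀ / (1 - c ^ 2)
  else if c ≤ 1 then θ₀ / (δ * (2 - δ))
  else if c ≤ 1 + δ then
    (θc * δ * (2 - δ) - θ₀) / (δ ^ 2 * (2 - δ)) * (c - 1) + θ₀ / (δ * (2 - δ))
  else θc

/-- The even function `h^δ` on `ℝ`, with `h^δ(0) = θ₀`. -/
noncomputable def hdelta (θ₀ θc δ c : ℝ) : ℝ :=
  if c = 0 then θ₀ else hdeltaAux θ₀ θc δ |c|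

/- ### Auxiliary machinery -/

noncomputable def P2f (θ₀ δ c : ℝ) : ℝ :=
  θ₀ / (2 * δ * (2 - δ)) * (c - 1 + δ) ^ 2
    + θ₀ / 2 * Real.log (2 / δ - 1) * (c - 1 + δ) + f2 θ₀ (1 - δ)

noncomputable def P3f (θ₀ θc δ c : ℝ) : ℝ :=
  (θc * δ * (2 - δ) - θ₀) / (6 * δ ^ 2 * (2 - δ)) * (c - 1) ^ 3
    + θ₀ / (2 * δ * (2 - δ)) * (c - 1) ^ 2
    + (θ₀ / (2 - δ) + θ₀ / 2 * Real.log ((2 - δ) / δ)) * (c - 1)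
    + δ * θ₀ / (2 * (2 - δ)) + θ₀ * Real.log (2 - δ)

noncomputable def P4f (θ₀ θc δ c : ℝ) : ℝ :=
  θc / 2 * (c - 1 - δ) ^ 2
    + (θc * δ / 2 + 3 * θ₀ / (2 * (2 - δ)) + θ₀ / 2 * Real.log ((2 - δ) / δ))
        * (c - 1 - δ)
    + θc * δ ^ 2 / 6 + 11 * θ₀ * δ / (6 * (2 - δ))
    + θ₀ * δ / 2 * Real.log ((2 - δ) / δ) + θ₀ * Real.log (2 - δ)

noncomputable def G1 (θ₀ c : ℝ) : ℝ := θ₀ / 2 * Real.log ((1 + c) / (1 - c))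

noncomputable def G2 (θ₀ δ c : ℝ) : ℝ :=
  θ₀ / (δ * (2 - δ)) * (c - 1 + δ) + θ₀ / 2 * Real.log ((2 - δ) / δ)

noncomputable def G3 (θ₀ θc δ c : ℝ) : ℝ :=
  (θc * δ * (2 - δ) - θ₀) / (2 * δ ^ 2 * (2 - δ)) * (c - 1) ^ 2
    + θ₀ / (δ * (2 - δ)) * (c - 1) + θ₀ / (2 - δ) + θ₀ / 2 * Real.log ((2 - δ) / δ)

noncomputable def G4 (θ₀ θc δ c : ℝ) : ℝ :=
  θc * (c - 1 - δ) + θc * δ / 2 + 3 * θ₀ / (2 * (2 - δ))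
    + θ₀ / 2 * Real.log ((2 - δ) / δ)

noncomputable def H3 (θ₀ θc δ c : ℝ) : ℝ :=
  (θc * δ * (2 - δ) - θ₀) / (δ ^ 2 * (2 - δ)) * (c - 1) + θ₀ / (δ * (2 - δ))

section
variable {θ₀ θc δ : ℝ}

/-- Gluing lemma for derivatives. -/
lemma glueD {f f₁ f₂ : ℝ → ℝ} {a d : ℝ} {s t : Set ℝ}
    (h₁ : HasDerivAt f₁ d a) (h₂ : HasDerivAt f₂ d a)
    (hs : Set.EqOn f f₁ s) (ht : Set.EqOn f f₂ t)
    (ha1 : a ∈ s) (ha2 : a ∈ t) (hmem : s ∪ t ∈ nhds a) : HasDerivAt f d a := by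
  have H1 : HasDerivWithinAt f d s a := (h₁.hasDerivWithinAt).congr hs (hs ha1)
  have H2 : HasDerivWithinAt f d t a := (h₂.hasDerivWithinAt).congr ht (ht ha2)
  exact (H1.union H2).hasDerivAt hmem

/-- Gluing lemma for continuity. -/
lemma glueC {f f₁ f₂ : ℝ → ℝ} {a : ℝ} {s t : Set ℝ}
    (h₁ : ContinuousAt f₁ a) (h₂ : ContinuousAt f₂ a)
    (hs : Set.EqOn f f₁ s) (ht : Set.EqOn f f₂ t)
    (ha1 : a ∈ s) (ha2 : a ∈ t) (hmem : s ∪ t ∈ nhds a) : ContinuousAt f a :=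
  ((h₁.continuousWithinAt.congr hs (hs ha1)).union
    (h₂.continuousWithinAt.congr ht (ht ha2))).continuousAt hmem

lemma DP1 (θ₀ : ℝ) {x : ℝ} (h1 : -1 < x) (h2 : x < 1) :
    HasDerivAt (f2 θ₀) (G1 θ₀ x) x := by
  have h1p : (0:ℝ) < 1 + x := by linarith
  have h2p : (0:ℝ) < 1 - x := by linarith
  have hc : HasDerivAt (fun c : ℝ => 1 + c) 1 x := by
    simpa using (hasDerivAt_id x).const_add 1
  have hc2 : HasDerivAt (fun c : ℝ => 1 - c) (-1) x := by
    simpa using (hasDerivAt_id x).const_sub 1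
  have d1 := hc.mul (hc.log h1p.ne')
  have d2 := hc2.mul (hc2.log h2p.ne')
  have := ((d1.add d2).const_mul (θ₀ / 2))
  have hf : f2 θ₀ = fun c => θ₀ / 2 *
      ((1 + c) * Real.log (1 + c) + (1 - c) * Real.log (1 - c)) := rfl
  rw [hf]
  unfold G1
  refine this.congr_deriv ?_
  rw [Real.log_div h1p.ne' h2p.ne']
  field_simp
  ring

lemma DG1 (θ₀ : ℝ) {x : ℝ} (h1 : -1 < x) (h2 : x < 1) :
    HasDerivAt (G1 θ₀) (θ₀ / (1 - x ^ 2)) x := by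
  have h1p : (0:ℝ) < 1 + x := by linarith
  have h2p : (0:ℝ) < 1 - x := by linarith
  have hc : HasDerivAt (fun c : ℝ => 1 + c) 1 x := by
    simpa using (hasDerivAt_id x).const_add 1
  have hc2 : HasDerivAt (fun c : ℝ => 1 - c) (-1) x := by
    simpa using (hasDerivAt_id x).const_sub 1
  have d : HasDerivAt (fun c => θ₀ / 2 * (Real.log (1 + c) - Real.log (1 - c)))
      (θ₀ / 2 * (1 / (1 + x) - (-1) / (1 - x))) x :=
    ((hc.log h1p.ne').sub (hc2.log h2p.ne')).const_mul (θ₀ / 2)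
  have he : G1 θ₀ =ᶠ[nhds x]
      (fun c => θ₀ / 2 * (Real.log (1 + c) - Real.log (1 - c))) := by
    filter_upwards [Ioo_mem_nhds h1 h2] with y hy
    unfold G1
    rw [Real.log_div (by linarith [hy.1] : (1:ℝ) + y ≠ 0) (by rintro h; nlinarith [hy.2])]
  have hd2 := d.congr_of_eventuallyEq he
  refine hd2.congr_deriv ?_
  have hne : (1:ℝ) - x ^ 2 ≠ 0 := by nlinarith
  rw [show (1:ℝ) - x ^ 2 = (1 + x) * (1 - x) by ring]
  field_simp
  ring

lemma DP2 (hδ0 : 0 < δ) (hδ1 : δ < 1) (θ₀ : ℝ) (x : ℝ) :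
    HasDerivAt (P2f θ₀ δ) (G2 θ₀ δ x) x := by
  have h2δ : (2:ℝ) - δ ≠ 0 := by linarith
  have h : HasDerivAt (fun c : ℝ => c - 1 + δ) 1 x :=
    ((hasDerivAt_id x).sub_const 1).add_const δ
  have hd := (((h.pow 2).const_mul (θ₀ / (2 * δ * (2 - δ)))).add
    (h.const_mul (θ₀ / 2 * Real.log (2 / δ - 1)))).add_const (f2 θ₀ (1 - δ))
  have e0 : 2 / δ - 1 = (2 - δ) / δ := by field_simp
  have hv : θ₀ / (2 * δ * (2 - δ)) * (↑(2:ℕ) * (x - 1 + δ) ^ (2 - 1) * 1)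
      + θ₀ / 2 * Real.log (2 / δ - 1) * 1 = G2 θ₀ δ x := by
    rw [e0]; unfold G2; push_cast; field_simp
  exact hv ▸ hd

lemma DP3 (hδ0 : 0 < δ) (hδ1 : δ < 1) (θ₀ θc : ℝ) (x : ℝ) :
    HasDerivAt (P3f θ₀ θc δ) (G3 θ₀ θc δ x) x := by
  have h2δ : (2:ℝ) - δ ≠ 0 := by linarith
  have h : HasDerivAt (fun c : ℝ => c - 1) 1 x := (hasDerivAt_id x).sub_const 1
  have hd := (((((h.pow 3).const_mul ((θc * δ * (2 - δ) - θ₀) / (6 * δ ^ 2 * (2 - δ)))).add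
    ((h.pow 2).const_mul (θ₀ / (2 * δ * (2 - δ))))).add
    (h.const_mul (θ₀ / (2 - δ) + θ₀ / 2 * Real.log ((2 - δ) / δ)))).add_const
    (δ * θ₀ / (2 * (2 - δ)))).add_const (θ₀ * Real.log (2 - δ))
  have hv : (θc * δ * (2 - δ) - θ₀) / (6 * δ ^ 2 * (2 - δ)) * (↑(3:ℕ) * (x - 1) ^ (3 - 1) * 1)
      + θ₀ / (2 * δ * (2 - δ)) * (↑(2:ℕ) * (x - 1) ^ (2 - 1) * 1)
      + (θ₀ / (2 - δ) + θ₀ / 2 * Real.log ((2 - δ) / δ)) * 1 = G3 θ₀ θc δ x := by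
    unfold G3; push_cast; field_simp; ring
  exact hv ▸ hd

lemma DP4 (θ₀ θc : ℝ) (x : ℝ) :
    HasDerivAt (P4f θ₀ θc δ) (G4 θ₀ θc δ x) x := by
  have h : HasDerivAt (fun c : ℝ => c - 1 - δ) 1 x :=
    ((hasDerivAt_id x).sub_const 1).sub_const δ
  have hd := (((((h.pow 2).const_mul (θc / 2)).add
    (h.const_mul (θc * δ / 2 + 3 * θ₀ / (2 * (2 - δ)) + θ₀ / 2 * Real.log ((2 - δ) / δ)))).add_const
    (θc * δ ^ 2 / 6)).add_const (11 * θ₀ * δ / (6 * (2 - δ)))).add_const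
    (θ₀ * δ / 2 * Real.log ((2 - δ) / δ) + θ₀ * Real.log (2 - δ))
  have hv : θc / 2 * (↑(2:ℕ) * (x - 1 - δ) ^ (2 - 1) * 1)
      + (θc * δ / 2 + 3 * θ₀ / (2 * (2 - δ)) + θ₀ / 2 * Real.log ((2 - δ) / δ)) * 1
      = G4 θ₀ θc δ x := by
    unfold G4; push_cast; ring
  have hf : P4f θ₀ θc δ = fun c => (θc / 2 * (c - 1 - δ) ^ 2
      + (θc * δ / 2 + 3 * θ₀ / (2 * (2 - δ)) + θ₀ / 2 * Real.log ((2 - δ) / δ)) * (c - 1 - δ)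
      + θc * δ ^ 2 / 6 + 11 * θ₀ * δ / (6 * (2 - δ)))
      + (θ₀ * δ / 2 * Real.log ((2 - δ) / δ) + θ₀ * Real.log (2 - δ)) := by
    funext c; unfold P4f; ring
  rw [hf]
  exact hv ▸ hd

lemma DG2 (θ₀ : ℝ) (x : ℝ) : HasDerivAt (G2 θ₀ δ) (θ₀ / (δ * (2 - δ))) x := by
  have h : HasDerivAt (fun c : ℝ => c - 1 + δ) 1 x :=
    ((hasDerivAt_id x).sub_const 1).add_const δ
  have hd := (h.const_mul (θ₀ / (δ * (2 - δ)))).add_const (θ₀ / 2 * Real.log ((2 - δ) / δ))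
  unfold G2
  simpa using hd

lemma DG3 (hδ0 : 0 < δ) (hδ1 : δ < 1) (θ₀ θc : ℝ) (x : ℝ) :
    HasDerivAt (G3 θ₀ θc δ) (H3 θ₀ θc δ x) x := by
  have h2δ : (2:ℝ) - δ ≠ 0 := by linarith
  have h : HasDerivAt (fun c : ℝ => c - 1) 1 x := (hasDerivAt_id x).sub_const 1
  have hd := ((((h.pow 2).const_mul ((θc * δ * (2 - δ) - θ₀) / (2 * δ ^ 2 * (2 - δ)))).add
    (h.const_mul (θ₀ / (δ * (2 - δ))))).add_const (θ₀ / (2 - δ))).add_const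
    (θ₀ / 2 * Real.log ((2 - δ) / δ))
  have hv : (θc * δ * (2 - δ) - θ₀) / (2 * δ ^ 2 * (2 - δ)) * (↑(2:ℕ) * (x - 1) ^ (2 - 1) * 1)
      + θ₀ / (δ * (2 - δ)) * 1 = H3 θ₀ θc δ x := by
    unfold H3; push_cast; field_simp
  exact hv ▸ hd

lemma DG4 (θ₀ θc : ℝ) (x : ℝ) : HasDerivAt (G4 θ₀ θc δ) θc x := by
  have h : HasDerivAt (fun c : ℝ => c - 1 - δ) 1 x :=
    ((hasDerivAt_id x).sub_const 1).sub_const δ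
  have hd := ((((h.const_mul θc).add_const (θc * δ / 2)).add_const
    (3 * θ₀ / (2 * (2 - δ)))).add_const (θ₀ / 2 * Real.log ((2 - δ) / δ)))
  unfold G4
  simpa using hd

/- junction value identities -/

lemma JV2 (hδ0 : 0 < δ) (hδ1 : δ < 1) (θ₀ θc : ℝ) : P2f θ₀ δ 1 = P3f θ₀ θc δ 1 := by
  have h2δ : (0:ℝ) < 2 - δ := by linarith
  have e0 : 2 / δ - 1 = (2 - δ) / δ := by field_simp
  have e1 : (1:ℝ) + (1 - δ) = 2 - δ := by ring
  have e2 : (1:ℝ) - (1 - δ) = δ := by ring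
  unfold P2f P3f f2
  rw [e0, e1, e2, Real.log_div h2δ.ne' hδ0.ne']
  field_simp
  ring

lemma JV3 (hδ0 : 0 < δ) (hδ1 : δ < 1) (θ₀ θc : ℝ) :
    P3f θ₀ θc δ (1 + δ) = P4f θ₀ θc δ (1 + δ) := by
  have h2δ : (2:ℝ) - δ ≠ 0 := by linarith
  unfold P3f P4f
  field_simp
  ring

lemma JD1 (θ₀ : ℝ) : G2 θ₀ δ (1 - δ) = G1 θ₀ (1 - δ) := by
  have e1 : (1:ℝ) + (1 - δ) = 2 - δ := by ring
  have e2 : (1:ℝ) - (1 - δ) = δ := by ring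
  unfold G1 G2
  rw [e1, e2]
  ring

lemma JD2 (hδ0 : 0 < δ) (hδ1 : δ < 1) (θ₀ θc : ℝ) : G3 θ₀ θc δ 1 = G2 θ₀ δ 1 := by
  have h2δ : (2:ℝ) - δ ≠ 0 := by linarith
  unfold G2 G3
  field_simp
  ring

lemma JD3 (hδ0 : 0 < δ) (hδ1 : δ < 1) (θ₀ θc : ℝ) :
    G4 θ₀ θc δ (1 + δ) = G3 θ₀ θc δ (1 + δ) := by
  have h2δ : (2:ℝ) - δ ≠ 0 := by linarith
  unfold G3 G4
  field_simp
  ring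

lemma JH1 (θ₀ : ℝ) : θ₀ / (δ * (2 - δ)) = θ₀ / (1 - (1 - δ) ^ 2) := by
  have : (1:ℝ) - (1 - δ) ^ 2 = δ * (2 - δ) := by ring
  rw [this]

lemma JH2 (θ₀ θc : ℝ) : H3 θ₀ θc δ 1 = θ₀ / (δ * (2 - δ)) := by
  unfold H3; ring

lemma JH3 (hδ0 : 0 < δ) (hδ1 : δ < 1) (θ₀ θc : ℝ) : H3 θ₀ θc δ (1 + δ) = θc := by
  have h2δ : (2:ℝ) - δ ≠ 0 := by linarith
  unfold H3
  field_simp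
  ring

/- ### EqOn lemmas for the pieces -/

lemma E1f : Set.EqOn (f2deltaAux θ₀ θc δ) (f2 θ₀) (Iic (1 - δ)) := fun x hx => by
  simp only [f2deltaAux, if_pos (mem_Iic.1 hx)]

lemma E2f (hδ0 : 0 < δ) :
    Set.EqOn (f2deltaAux θ₀ θc δ) (P2f θ₀ δ) (Icc (1 - δ) 1) := by
  intro x hx
  rcases eq_or_lt_of_le hx.1 with h | h
  · rw [← h]
    show f2deltaAux θ₀ θc δ (1 - δ) = P2f θ₀ δ (1 - δ)
    unfold f2deltaAux P2f
    rw [if_pos le_rfl]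
    have hz : (1:ℝ) - δ - 1 + δ = 0 := by ring
    rw [hz]
    ring
  · unfold f2deltaAux P2f
    rw [if_neg (not_le.2 h), if_pos hx.2]

lemma E3f (hδ0 : 0 < δ) (hδ1 : δ < 1) :
    Set.EqOn (f2deltaAux θ₀ θc δ) (P3f θ₀ θc δ) (Icc 1 (1 + δ)) := by
  intro x hx
  rcases eq_or_lt_of_le hx.1 with h | h
  · rw [← h]
    have h1 : f2deltaAux θ₀ θc δ 1 = P2f θ₀ δ 1 := by
      unfold f2deltaAux P2f
      rw [if_neg (by linarith), if_pos le_rfl]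
    rw [h1, JV2 hδ0 hδ1]
  · unfold f2deltaAux P3f
    rw [if_neg (by linarith), if_neg (not_le.2 h), if_pos hx.2]

lemma E4f (hδ0 : 0 < δ) (hδ1 : δ < 1) :
    Set.EqOn (f2deltaAux θ₀ θc δ) (P4f θ₀ θc δ) (Ici (1 + δ)) := by
  intro x hx
  rcases eq_or_lt_of_le (mem_Ici.1 hx) with h | h
  · rw [← h]
    have h1 : f2deltaAux θ₀ θc δ (1 + δ) = P3f θ₀ θc δ (1 + δ) := by
      unfold f2deltaAux P3f
      rw [if_neg (by linarith), if_neg (by linarith), if_pos le_rfl]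
    rw [h1, JV3 hδ0 hδ1]
  · unfold f2deltaAux P4f
    rw [if_neg (by linarith), if_neg (by linarith), if_neg (not_le.2 h)]

lemma E1g : Set.EqOn (gdeltaAux θ₀ θc δ) (G1 θ₀) (Iic (1 - δ)) := fun x hx => by
  simp only [gdeltaAux, G1, if_pos (mem_Iic.1 hx)]

lemma E2g (hδ0 : 0 < δ) :
    Set.EqOn (gdeltaAux θ₀ θc δ) (G2 θ₀ δ) (Icc (1 - δ) 1) := by
  intro x hx
  rcases eq_or_lt_of_le hx.1 with h | h
  · rw [← h]
    have h1 : gdeltaAux θ₀ θc δ (1 - δ) = G1 θ₀ (1 - δ) := by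
      unfold gdeltaAux G1
      rw [if_pos le_rfl]
    rw [h1, ← JD1]
  · unfold gdeltaAux G2
    rw [if_neg (not_le.2 h), if_pos hx.2]

lemma E3g (hδ0 : 0 < δ) (hδ1 : δ < 1) :
    Set.EqOn (gdeltaAux θ₀ θc δ) (G3 θ₀ θc δ) (Icc 1 (1 + δ)) := by
  intro x hx
  rcases eq_or_lt_of_le hx.1 with h | h
  · rw [← h]
    have h1 : gdeltaAux θ₀ θc δ 1 = G2 θ₀ δ 1 := by
      unfold gdeltaAux G2
      rw [if_neg (by linarith), if_pos le_rfl]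
    rw [h1, ← JD2 hδ0 hδ1]
  · unfold gdeltaAux G3
    rw [if_neg (by linarith), if_neg (not_le.2 h), if_pos hx.2]

lemma E4g (hδ0 : 0 < δ) (hδ1 : δ < 1) :
    Set.EqOn (gdeltaAux θ₀ θc δ) (G4 θ₀ θc δ) (Ici (1 + δ)) := by
  intro x hx
  rcases eq_or_lt_of_le (mem_Ici.1 hx) with h | h
  · rw [← h]
    have h1 : gdeltaAux θ₀ θc δ (1 + δ) = G3 θ₀ θc δ (1 + δ) := by
      unfold gdeltaAux G3
      rw [if_neg (by linarith), if_neg (by linarith), if_pos le_rfl]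
    rw [h1, ← JD3 hδ0 hδ1]
  · unfold gdeltaAux G4
    rw [if_neg (by linarith), if_neg (by linarith), if_neg (not_le.2 h)]

lemma E1h : Set.EqOn (hdeltaAux θ₀ θc δ) (fun c => θ₀ / (1 - c ^ 2)) (Iic (1 - δ)) :=
  fun x hx => by simp only [hdeltaAux, if_pos (mem_Iic.1 hx)]

lemma E2h (hδ0 : 0 < δ) :
    Set.EqOn (hdeltaAux θ₀ θc δ) (fun _ => θ₀ / (δ * (2 - δ))) (Icc (1 - δ) 1) := by
  intro x hx
  rcases eq_or_lt_of_le hx.1 with h | h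
  · rw [← h]
    have h1 : hdeltaAux θ₀ θc δ (1 - δ) = θ₀ / (1 - (1 - δ) ^ 2) := by
      unfold hdeltaAux
      rw [if_pos le_rfl]
    rw [h1]
    exact (JH1 θ₀).symm
  · unfold hdeltaAux
    rw [if_neg (not_le.2 h), if_pos hx.2]

lemma E3h (hδ0 : 0 < δ) (hδ1 : δ < 1) :
    Set.EqOn (hdeltaAux θ₀ θc δ) (H3 θ₀ θc δ) (Icc 1 (1 + δ)) := by
  intro x hx
  rcases eq_or_lt_of_le hx.1 with h | h
  · rw [← h]
    have h1 : hdeltaAux θ₀ θc δ 1 = θ₀ / (δ * (2 - δ)) := by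
      unfold hdeltaAux
      rw [if_neg (by linarith), if_pos le_rfl]
    rw [h1, ← JH2 θ₀ θc]
  · unfold hdeltaAux H3
    rw [if_neg (by linarith), if_neg (not_le.2 h), if_pos hx.2]

lemma E4h (hδ0 : 0 < δ) (hδ1 : δ < 1) :
    Set.EqOn (hdeltaAux θ₀ θc δ) (fun _ => θc) (Ici (1 + δ)) := by
  intro x hx
  rcases eq_or_lt_of_le (mem_Ici.1 hx) with h | h
  · rw [← h]
    have h1 : hdeltaAux θ₀ θc δ (1 + δ) = H3 θ₀ θc δ (1 + δ) := by
      unfold hdeltaAux H3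
      rw [if_neg (by linarith), if_neg (by linarith), if_pos le_rfl]
    rw [h1, JH3 hδ0 hδ1]
  · unfold hdeltaAux
    rw [if_neg (by linarith), if_neg (by linarith), if_neg (not_le.2 h)]

/- ### Derivative of `f2deltaAux` on `(0, ∞)` -/

lemma auxD1 (hδ0 : 0 < δ) (hδ1 : δ < 1) {c : ℝ} (hc : 0 < c) :
    HasDerivAt (f2deltaAux θ₀ θc δ) (gdeltaAux θ₀ θc δ c) c := by
  rcases lt_trichotomy c (1 - δ) with h | h | h
  · have hval : gdeltaAux θ₀ θc δ c = G1 θ₀ c := by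
      unfold gdeltaAux G1; rw [if_pos h.le]
    rw [hval]
    refine (DP1 θ₀ (by linarith) (by linarith)).congr_of_eventuallyEq ?_
    filter_upwards [Iio_mem_nhds h] with y hy
    exact E1f (mem_Iic.2 (mem_Iio.1 hy).le)
  · have hval : gdeltaAux θ₀ θc δ c = G1 θ₀ c := by
      unfold gdeltaAux G1; rw [if_pos h.le]
    rw [hval, h]
    exact glueD (DP1 θ₀ (by linarith) (by linarith))
      ((JD1 θ₀) ▸ DP2 hδ0 hδ1 θ₀ (1 - δ)) E1f (E2f hδ0)
      (mem_Iic.2 le_rfl) ⟨le_rfl, by linarith⟩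
      (by rw [Iic_union_Icc_eq_Iic (by linarith : (1:ℝ) - δ ≤ 1)]
          exact Iic_mem_nhds (by linarith))
  · rcases lt_trichotomy c 1 with h1 | h1 | h1
    · have hval : gdeltaAux θ₀ θc δ c = G2 θ₀ δ c := by
        unfold gdeltaAux G2; rw [if_neg (not_le.2 h), if_pos h1.le]
      rw [hval]
      refine (DP2 hδ0 hδ1 θ₀ c).congr_of_eventuallyEq ?_
      filter_upwards [Ioo_mem_nhds h h1] with y hy
      exact E2f hδ0 ⟨hy.1.le, hy.2.le⟩
    · have hval : gdeltaAux θ₀ θc δ c = G2 θ₀ δ c := by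
        unfold gdeltaAux G2; rw [if_neg (not_le.2 h), if_pos h1.le]
      rw [hval, h1]
      exact glueD (DP2 hδ0 hδ1 θ₀ 1)
        ((JD2 hδ0 hδ1 θ₀ θc) ▸ DP3 hδ0 hδ1 θ₀ θc 1) (E2f hδ0) (E3f hδ0 hδ1)
        ⟨by linarith, le_rfl⟩ ⟨le_rfl, by linarith⟩
        (by rw [Icc_union_Icc_eq_Icc (by linarith : (1:ℝ) - δ ≤ 1)
              (by linarith : (1:ℝ) ≤ 1 + δ)]
            exact Icc_mem_nhds (by linarith) (by linarith))
    · rcases lt_trichotomy c (1 + δ) with h2 | h2 | h2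
      · have hval : gdeltaAux θ₀ θc δ c = G3 θ₀ θc δ c := by
          unfold gdeltaAux G3
          rw [if_neg (by linarith), if_neg (not_le.2 h1), if_pos h2.le]
        rw [hval]
        refine (DP3 hδ0 hδ1 θ₀ θc c).congr_of_eventuallyEq ?_
        filter_upwards [Ioo_mem_nhds h1 h2] with y hy
        exact E3f hδ0 hδ1 ⟨hy.1.le, hy.2.le⟩
      · have hval : gdeltaAux θ₀ θc δ c = G3 θ₀ θc δ c := by
          unfold gdeltaAux G3
          rw [if_neg (by linarith), if_neg (not_le.2 h1), if_pos h2.le]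
        rw [hval, h2]
        exact glueD (DP3 hδ0 hδ1 θ₀ θc (1 + δ))
          ((JD3 hδ0 hδ1 θ₀ θc) ▸ DP4 θ₀ θc (1 + δ)) (E3f hδ0 hδ1) (E4f hδ0 hδ1)
          ⟨by linarith, le_rfl⟩ (mem_Ici.2 le_rfl)
          (by rw [Icc_union_Ici_eq_Ici (by linarith : (1:ℝ) ≤ 1 + δ)]
              exact Ici_mem_nhds (by linarith))
      · have hval : gdeltaAux θ₀ θc δ c = G4 θ₀ θc δ c := by
          unfold gdeltaAux G4
          rw [if_neg (by linarith), if_neg (by linarith), if_neg (not_le.2 h2)]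
        rw [hval]
        refine (DP4 θ₀ θc c).congr_of_eventuallyEq ?_
        filter_upwards [Ioi_mem_nhds h2] with y hy
        exact E4f hδ0 hδ1 (mem_Ici.2 (mem_Ioi.1 hy).le)

/- ### Derivative of `gdeltaAux` on `(0, ∞)` -/

lemma auxD2 (hδ0 : 0 < δ) (hδ1 : δ < 1) {c : ℝ} (hc : 0 < c) :
    HasDerivAt (gdeltaAux θ₀ θc δ) (hdeltaAux θ₀ θc δ c) c := by
  rcases lt_trichotomy c (1 - δ) with h | h | h
  · have hval : hdeltaAux θ₀ θc δ c = θ₀ / (1 - c ^ 2) := by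
      unfold hdeltaAux; rw [if_pos h.le]
    rw [hval]
    refine (DG1 θ₀ (by linarith) (by linarith)).congr_of_eventuallyEq ?_
    filter_upwards [Iio_mem_nhds h] with y hy
    exact E1g (mem_Iic.2 (mem_Iio.1 hy).le)
  · have hval : hdeltaAux θ₀ θc δ c = θ₀ / (1 - c ^ 2) := by
      unfold hdeltaAux; rw [if_pos h.le]
    rw [hval, h]
    exact glueD (DG1 θ₀ (by linarith) (by linarith))
      ((JH1 θ₀) ▸ DG2 θ₀ (1 - δ)) E1g (E2g hδ0)
      (mem_Iic.2 le_rfl) ⟨le_rfl, by linarith⟩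
      (by rw [Iic_union_Icc_eq_Iic (by linarith : (1:ℝ) - δ ≤ 1)]
          exact Iic_mem_nhds (by linarith))
  · rcases lt_trichotomy c 1 with h1 | h1 | h1
    · have hval : hdeltaAux θ₀ θc δ c = θ₀ / (δ * (2 - δ)) := by
        unfold hdeltaAux; rw [if_neg (not_le.2 h), if_pos h1.le]
      rw [hval]
      refine (DG2 θ₀ c).congr_of_eventuallyEq ?_
      filter_upwards [Ioo_mem_nhds h h1] with y hy
      exact E2g hδ0 ⟨hy.1.le, hy.2.le⟩
    · have hval : hdeltaAux θ₀ θc δ c = θ₀ / (δ * (2 - δ)) := by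
        unfold hdeltaAux; rw [if_neg (not_le.2 h), if_pos h1.le]
      rw [hval, h1]
      exact glueD (DG2 θ₀ 1)
        ((JH2 θ₀ θc) ▸ DG3 hδ0 hδ1 θ₀ θc 1) (E2g hδ0) (E3g hδ0 hδ1)
        ⟨by linarith, le_rfl⟩ ⟨le_rfl, by linarith⟩
        (by rw [Icc_union_Icc_eq_Icc (by linarith : (1:ℝ) - δ ≤ 1)
              (by linarith : (1:ℝ) ≤ 1 + δ)]
            exact Icc_mem_nhds (by linarith) (by linarith))
    · rcases lt_trichotomy c (1 + δ) with h2 | h2 | h2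
      · have hval : hdeltaAux θ₀ θc δ c = H3 θ₀ θc δ c := by
          unfold hdeltaAux H3
          rw [if_neg (by linarith), if_neg (not_le.2 h1), if_pos h2.le]
        rw [hval]
        refine (DG3 hδ0 hδ1 θ₀ θc c).congr_of_eventuallyEq ?_
        filter_upwards [Ioo_mem_nhds h1 h2] with y hy
        exact E3g hδ0 hδ1 ⟨hy.1.le, hy.2.le⟩
      · have hval : hdeltaAux θ₀ θc δ c = H3 θ₀ θc δ c := by
          unfold hdeltaAux H3
          rw [if_neg (by linarith), if_neg (not_le.2 h1), if_pos h2.le]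
        rw [hval, h2, JH3 hδ0 hδ1 θ₀ θc]
        have hone : HasDerivAt (G3 θ₀ θc δ) θc (1 + δ) := by
          have := DG3 hδ0 hδ1 θ₀ θc (1 + δ)
          rwa [JH3 hδ0 hδ1 θ₀ θc] at this
        exact glueD hone
          (DG4 θ₀ θc (1 + δ)) (E3g hδ0 hδ1) (E4g hδ0 hδ1)
          ⟨by linarith, le_rfl⟩ (mem_Ici.2 le_rfl)
          (by rw [Icc_union_Ici_eq_Ici (by linarith : (1:ℝ) ≤ 1 + δ)]
              exact Ici_mem_nhds (by linarith))
      · have hval : hdeltaAux θ₀ θc δ c = θc := by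
          unfold hdeltaAux
          rw [if_neg (by linarith), if_neg (by linarith), if_neg (not_le.2 h2)]
        rw [hval]
        refine (DG4 (δ := δ) θ₀ θc c).congr_of_eventuallyEq ?_
        filter_upwards [Ioi_mem_nhds h2] with y hy
        exact E4g hδ0 hδ1 (mem_Ici.2 (mem_Ioi.1 hy).le)

/- ### Continuity of `hdeltaAux` on `[0, ∞)` -/

lemma auxC (hδ0 : 0 < δ) (hδ1 : δ < 1) {c : ℝ} (hc : 0 ≤ c) :
    ContinuousAt (hdeltaAux θ₀ θc δ) c := by
  have C1 : ∀ {x : ℝ}, -1 < x → x < 1 → ContinuousAt (fun c : ℝ => θ₀ / (1 - c ^ 2)) x := by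
    intro x hx1 hx2
    exact continuousAt_const.div (by fun_prop) (by nlinarith)
  have C3 : ∀ x : ℝ, ContinuousAt (H3 θ₀ θc δ) x := by
    intro x; unfold H3; fun_prop
  rcases lt_trichotomy c (1 - δ) with h | h | h
  · refine (C1 (by linarith) (by linarith)).congr ?_
    filter_upwards [Iio_mem_nhds h] with y hy
    exact (E1h (mem_Iic.2 (mem_Iio.1 hy).le)).symm
  · rw [h]
    exact glueC (C1 (by linarith) (by linarith)) continuousAt_const E1h (E2h hδ0)
      (mem_Iic.2 le_rfl) ⟨le_rfl, by linarith⟩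
      (by rw [Iic_union_Icc_eq_Iic (by linarith : (1:ℝ) - δ ≤ 1)]
          exact Iic_mem_nhds (by linarith))
  · rcases lt_trichotomy c 1 with h1 | h1 | h1
    · refine (continuousAt_const :
          ContinuousAt (fun _ : ℝ => θ₀ / (δ * (2 - δ))) c).congr ?_
      filter_upwards [Ioo_mem_nhds h h1] with y hy
      exact (E2h hδ0 ⟨hy.1.le, hy.2.le⟩).symm
    · rw [h1]
      exact glueC continuousAt_const (C3 1) (E2h hδ0) (E3h hδ0 hδ1)
        ⟨by linarith, le_rfl⟩ ⟨le_rfl, by linarith⟩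
        (by rw [Icc_union_Icc_eq_Icc (by linarith : (1:ℝ) - δ ≤ 1)
              (by linarith : (1:ℝ) ≤ 1 + δ)]
            exact Icc_mem_nhds (by linarith) (by linarith))
    · rcases lt_trichotomy c (1 + δ) with h2 | h2 | h2
      · refine (C3 c).congr ?_
        filter_upwards [Ioo_mem_nhds h1 h2] with y hy
        exact (E3h hδ0 hδ1 ⟨hy.1.le, hy.2.le⟩).symm
      · rw [h2]
        exact glueC (C3 (1 + δ)) continuousAt_const (E3h hδ0 hδ1) (E4h hδ0 hδ1)
          ⟨by linarith, le_rfl⟩ (mem_Ici.2 le_rfl)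
          (by rw [Icc_union_Ici_eq_Ici (by linarith : (1:ℝ) ≤ 1 + δ)]
              exact Ici_mem_nhds (by linarith))
      · refine (continuousAt_const :
            ContinuousAt (fun _ : ℝ => θc) c).congr ?_
        filter_upwards [Ioi_mem_nhds h2] with y hy
        exact (E4h hδ0 hδ1 (mem_Ici.2 (mem_Ioi.1 hy).le)).symm

/- ### symmetry lemmas -/

lemma f2_even (θ₀ x : ℝ) : f2 θ₀ (-x) = f2 θ₀ x := by
  unfold f2
  rw [show (1:ℝ) + -x = 1 - x by ring, show (1:ℝ) - -x = 1 + x by ring]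
  ring

lemma f2delta_even (θ₀ θc δ x : ℝ) : f2delta θ₀ θc δ (-x) = f2delta θ₀ θc δ x := by
  simp [f2delta, abs_neg]

lemma gdelta_odd (hδ1 : δ < 1) (x : ℝ) : gdelta θ₀ θc δ (-x) = -gdelta θ₀ θc δ x := by
  rcases lt_trichotomy x 0 with h | h | h
  · simp [gdelta, not_le.2 h, neg_nonneg.2 h.le]
  · rw [h]
    have : gdeltaAux θ₀ θc δ 0 = 0 := by
      unfold gdeltaAux
      rw [if_pos (by linarith : (0:ℝ) ≤ 1 - δ)]
      norm_num
    simp [gdelta, this]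
  · simp [gdelta, h.le, not_le.2 (neg_neg_iff_pos.2 h)]

/- ### Full-line derivative lemmas -/

lemma L1 (hδ0 : 0 < δ) (hδ1 : δ < 1) (c : ℝ) :
    HasDerivAt (f2delta θ₀ θc δ) (gdelta θ₀ θc δ c) c := by
  rcases lt_trichotomy c 0 with h | h | h
  · have hpos : HasDerivAt (f2delta θ₀ θc δ) (gdeltaAux θ₀ θc δ (-c)) (-c) := by
      refine (auxD1 hδ0 hδ1 (by linarith)).congr_of_eventuallyEq ?_
      filter_upwards [Ioi_mem_nhds (by linarith : (0:ℝ) < -c)] with y hy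
      simp [f2delta, abs_of_pos (mem_Ioi.1 hy)]
    have hcomp := hpos.comp c (hasDerivAt_neg c)
    have hfun : (f2delta θ₀ θc δ ∘ Neg.neg) = f2delta θ₀ θc δ := by
      funext y
      exact f2delta_even θ₀ θc δ y
    rw [hfun] at hcomp
    have hval : gdelta θ₀ θc δ c = gdeltaAux θ₀ θc δ (-c) * -1 := by
      unfold gdelta
      rw [if_neg (not_le.2 h)]
      ring
    rw [hval]
    exact hcomp
  · rw [h]
    have hval : gdelta θ₀ θc δ 0 = G1 θ₀ 0 := by
      unfold gdelta gdeltaAux G1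
      rw [if_pos le_rfl, if_pos (by linarith : (0:ℝ) ≤ 1 - δ)]
    rw [hval]
    refine (DP1 θ₀ (by norm_num) (by norm_num)).congr_of_eventuallyEq ?_
    have hev : ∀ᶠ y in nhds (0:ℝ), |y| < 1 - δ := by
      have := eventually_abs_sub_lt (0:ℝ) (by linarith : (0:ℝ) < 1 - δ)
      simpa using this
    filter_upwards [hev] with y hy
    have h1 : f2delta θ₀ θc δ y = f2 θ₀ |y| := by
      unfold f2delta f2deltaAux
      rw [if_pos hy.le]
    rw [h1]
    rcases abs_cases y with ⟨he, _⟩ | ⟨he, _⟩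
    · rw [he]
    · rw [he, f2_even]
  · have hval : gdelta θ₀ θc δ c = gdeltaAux θ₀ θc δ c := by
      unfold gdelta; rw [if_pos h.le]
    rw [hval]
    refine (auxD1 hδ0 hδ1 h).congr_of_eventuallyEq ?_
    filter_upwards [Ioi_mem_nhds h] with y hy
    simp [f2delta, abs_of_pos (mem_Ioi.1 hy)]

lemma L2 (hδ0 : 0 < δ) (hδ1 : δ < 1) (c : ℝ) :
    HasDerivAt (gdelta θ₀ θc δ) (hdelta θ₀ θc δ c) c := by
  rcases lt_trichotomy c 0 with h | h | h
  · have hpos : HasDerivAt (gdelta θ₀ θc δ) (hdeltaAux θ₀ θc δ (-c)) (-c) := by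
      refine (auxD2 hδ0 hδ1 (by linarith)).congr_of_eventuallyEq ?_
      filter_upwards [Ioi_mem_nhds (by linarith : (0:ℝ) < -c)] with y hy
      unfold gdelta
      rw [if_pos hy.le]
    have hcomp : HasDerivAt (fun x => -(gdelta θ₀ θc δ ∘ Neg.neg) x)
        (-(hdeltaAux θ₀ θc δ (-c) * -1)) c := (hpos.comp c (hasDerivAt_neg c)).neg
    have hfun : (fun x => -(gdelta θ₀ θc δ ∘ Neg.neg) x) = gdelta θ₀ θc δ := by
      funext y
      show -(gdelta θ₀ θc δ (-y)) = gdelta θ₀ θc δ y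
      rw [gdelta_odd hδ1]
      ring
    rw [hfun] at hcomp
    have hval : hdelta θ₀ θc δ c = -(hdeltaAux θ₀ θc δ (-c) * -1) := by
      unfold hdelta
      rw [if_neg h.ne, abs_of_neg h]
      ring
    rw [hval]
    exact hcomp
  · rw [h]
    have hval : hdelta θ₀ θc δ 0 = θ₀ / (1 - (0:ℝ) ^ 2) := by
      unfold hdelta
      rw [if_pos rfl]
      norm_num
    rw [hval]
    refine (DG1 θ₀ (by norm_num) (by norm_num)).congr_of_eventuallyEq ?_
    have hev : ∀ᶠ y in nhds (0:ℝ), |y| < 1 - δ := by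
      have := eventually_abs_sub_lt (0:ℝ) (by linarith : (0:ℝ) < 1 - δ)
      simpa using this
    filter_upwards [hev] with y hy
    rcases le_or_gt 0 y with hy0 | hy0
    · have : gdelta θ₀ θc δ y = gdeltaAux θ₀ θc δ y := by
        unfold gdelta; rw [if_pos hy0]
      rw [this]
      exact E1g (by rw [abs_of_nonneg hy0] at hy; exact mem_Iic.2 hy.le)
    · have h1 : gdelta θ₀ θc δ y = -gdeltaAux θ₀ θc δ (-y) := by
        unfold gdelta; rw [if_neg (not_le.2 hy0)]
      have h2 : gdeltaAux θ₀ θc δ (-y) = G1 θ₀ (-y) :=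
        E1g (by rw [abs_of_neg hy0] at hy; exact mem_Iic.2 hy.le)
      rw [h1, h2]
      unfold G1
      rw [show (1:ℝ) + -y = 1 - y by ring, show (1:ℝ) - -y = 1 + y by ring,
        show (1 - y) / (1 + y) = ((1 + y) / (1 - y))⁻¹ by rw [inv_div],
        Real.log_inv]
      ring
  · have hval : hdelta θ₀ θc δ c = hdeltaAux θ₀ θc δ c := by
      unfold hdelta
      rw [if_neg h.ne', abs_of_pos h]
    rw [hval]
    refine (auxD2 hδ0 hδ1 h).congr_of_eventuallyEq ?_
    filter_upwards [Ioi_mem_nhds h] with y hy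
    unfold gdelta
    rw [if_pos hy.le]

lemma L3 (hδ0 : 0 < δ) (hδ1 : δ < 1) : Continuous (hdelta θ₀ θc δ) := by
  have he : hdelta θ₀ θc δ = fun x => hdeltaAux θ₀ θc δ |x| := by
    funext x
    by_cases hx : x = 0
    · rw [hx]
      unfold hdelta hdeltaAux
      rw [if_pos rfl, abs_zero, if_pos (by linarith : (0:ℝ) ≤ 1 - δ)]
      norm_num
    · unfold hdelta
      rw [if_neg hx]
  rw [he]
  exact continuous_iff_continuousAt.2 fun x =>
    (auxC hδ0 hδ1 (abs_nonneg x)).comp continuous_abs.continuousAt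

end

/-- For all `0 < θ₀ < θc` and every `δ ∈ (0,1)`, the regularized
potential `f₂^δ` is twice continuously differentiable on all of `ℝ`. -/
theorem f2delta_contDiff (θ₀ θc δ : ℝ) (hθ₀ : 0 < θ₀) (hθ : θ₀ < θc)
    (hδ : δ ∈ Set.Ioo (0:ℝ) 1) :
    ContDiff ℝ 2 (f2delta θ₀ θc δ) := by
  obtain ⟨hδ0, hδ1⟩ := hδ
  have hd1 : deriv (f2delta θ₀ θc δ) = gdelta θ₀ θc δ :=
    funext fun c => (L1 hδ0 hδ1 c).deriv
  have hd2 : deriv (gdelta θ₀ θc δ) = hdelta θ₀ θc δ :=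
    funext fun c => (L2 hδ0 hδ1 c).deriv
  have h2 : (2 : WithTop ℕ∞) = 1 + 1 := by norm_num
  rw [h2, contDiff_succ_iff_deriv]
  refine ⟨fun c => (L1 hδ0 hδ1 c).differentiableAt, by simp, ?_⟩
  rw [hd1, contDiff_one_iff_deriv]
  exact ⟨fun c => (L2 hδ0 hδ1 c).differentiableAt, by rw [hd2]; exact L3 hδ0 hδ1⟩
end

section
/- For all real numbers θ₀, θ_c with 0 < θ₀ < θ_c and every δ ∈ (0,1), the function f₂^δ is differentiable on ℝ and its derivative equals the odd extension g̃^δ of the explicit piecewise function g^δ; that is, deriv f₂^δ(c) = g^δ(c) for every c ≥ 0 and deriv f₂^δ(c) = −g^δ(−c) for every c < 0. -/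
open Real Set

/-! ### Auxiliary lemmas -/

set_option maxHeartbeats 1000000

lemma f2_hasDerivAt (θ₀ : ℝ) {c : ℝ} (h1 : -1 < c) (h2 : c < 1) :
    HasDerivAt (f2 θ₀) (θ₀ / 2 * Real.log ((1 + c) / (1 - c))) c := by
  have h1' : (0:ℝ) < 1 + c := by linarith
  have h2' : (0:ℝ) < 1 - c := by linarith
  have hu : HasDerivAt (fun c : ℝ => 1 + c) 1 c := (hasDerivAt_id c).const_add 1
  have hv : HasDerivAt (fun c : ℝ => 1 - c) (-1) c := (hasDerivAt_id c).const_sub 1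
  have ha := hu.mul (hu.log h1'.ne')
  have hb := hv.mul (hv.log h2'.ne')
  have h := (ha.add hb).const_mul (θ₀ / 2)
  have : HasDerivAt (f2 θ₀)
      (θ₀ / 2 * (1 * Real.log (1 + c) + (1 + c) * (1 / (1 + c)) +
        (-1 * Real.log (1 - c) + (1 - c) * (-1 / (1 - c))))) c := h
  convert this using 1
  rw [Real.log_div h1'.ne' h2'.ne']
  field_simp
  ring

lemma hasDerivAt_quad (A B C x D : ℝ) (u : ℝ → ℝ) (hu : HasDerivAt u 1 x)
    (hD : D = 2 * A * u x + B) :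
    HasDerivAt (fun c => A * u c ^ 2 + B * u c + C) D x := by
  have h := (((hu.pow 2).const_mul A).add (hu.const_mul B)).add_const C
  refine h.congr_deriv ?_
  rw [hD]; push_cast; ring

lemma hasDerivAt_cubic (A B C K1 K2 x D : ℝ) (u : ℝ → ℝ) (hu : HasDerivAt u 1 x)
    (hD : D = 3 * A * u x ^ 2 + 2 * B * u x + C) :
    HasDerivAt (fun c => A * u c ^ 3 + B * u c ^ 2 + C * u c + K1 + K2) D x := by
  have h := (((((hu.pow 3).const_mul A).add ((hu.pow 2).const_mul B)).add
      (hu.const_mul C)).add_const K1).add_const K2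
  refine h.congr_deriv ?_
  rw [hD]; push_cast; ring

lemma hasDerivAt_quad4 (A B K1 K2 K3 K4 x D : ℝ) (u : ℝ → ℝ) (hu : HasDerivAt u 1 x)
    (hD : D = 2 * A * u x + B) :
    HasDerivAt (fun c => A * u c ^ 2 + B * u c + K1 + K2 + K3 + K4) D x := by
  have h := (((((hu.pow 2).const_mul A).add (hu.const_mul B)).add_const K1).add_const
      K2).add_const K3 |>.add_const K4
  refine h.congr_deriv ?_
  rw [hD]; push_cast; ring

lemma aux_hasDerivAt (θ₀ θc δ : ℝ) (hδ0 : 0 < δ) (hδ1 : δ < 1)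
    {c : ℝ} (hc : -1 < c) :
    HasDerivAt (f2deltaAux θ₀ θc δ) (gdeltaAux θ₀ θc δ c) c := by
  have h2δ : (0:ℝ) < 2 - δ := by linarith
  have hδ0' : δ ≠ 0 := hδ0.ne'
  have h2δ' : (2:ℝ) - δ ≠ 0 := h2δ.ne'
  -- linear inner functions
  have hu1 : ∀ x : ℝ, HasDerivAt (fun c : ℝ => c - 1 + δ) 1 x := fun x => by
    simpa using ((hasDerivAt_id x).sub_const 1).add_const δ
  have hu2 : ∀ x : ℝ, HasDerivAt (fun c : ℝ => c - 1) 1 x := fun x =>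
    (hasDerivAt_id x).sub_const 1
  have hu3 : ∀ x : ℝ, HasDerivAt (fun c : ℝ => c - 1 - δ) 1 x := fun x =>
    ((hasDerivAt_id x).sub_const 1).sub_const δ
  have hlogarg : (2:ℝ) / δ - 1 = (2 - δ) / δ := by field_simp
  -- value matching at junctions
  have hval1 : f2deltaAux θ₀ θc δ (1 - δ) =
      θ₀ / (2 * δ * (2 - δ)) * ((1 - δ) - 1 + δ) ^ 2
        + θ₀ / 2 * Real.log (2 / δ - 1) * ((1 - δ) - 1 + δ) + f2 θ₀ (1 - δ) := by
    simp only [f2deltaAux, if_pos (le_refl (1 - δ))]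
    ring
  have hf2val : f2 θ₀ (1 - δ) =
      θ₀ / 2 * ((2 - δ) * Real.log (2 - δ) + δ * Real.log δ) := by
    rw [f2, show (1:ℝ) + (1 - δ) = 2 - δ by ring, show (1:ℝ) - (1 - δ) = δ by ring]
  have hlog2 : Real.log (2 / δ - 1) = Real.log (2 - δ) - Real.log δ := by
    rw [hlogarg, Real.log_div h2δ' hδ0']
  have hlog3 : Real.log ((2 - δ) / δ) = Real.log (2 - δ) - Real.log δ :=
    Real.log_div h2δ' hδ0'
  have hval2 : f2deltaAux θ₀ θc δ 1 =
      (θc * δ * (2 - δ) - θ₀) / (6 * δ ^ 2 * (2 - δ)) * ((1:ℝ) - 1) ^ 3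
        + θ₀ / (2 * δ * (2 - δ)) * ((1:ℝ) - 1) ^ 2
        + (θ₀ / (2 - δ) + θ₀ / 2 * Real.log ((2 - δ) / δ)) * ((1:ℝ) - 1)
        + δ * θ₀ / (2 * (2 - δ)) + θ₀ * Real.log (2 - δ) := by
    have hne : ¬ (1:ℝ) ≤ 1 - δ := by linarith
    simp only [f2deltaAux, if_neg hne, if_pos (le_refl (1:ℝ))]
    rw [hf2val, hlog2, hlog3]
    field_simp
    ring
  have hval3 : f2deltaAux θ₀ θc δ (1 + δ) =
      θc / 2 * ((1 + δ) - 1 - δ) ^ 2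
        + (θc * δ / 2 + 3 * θ₀ / (2 * (2 - δ)) + θ₀ / 2 * Real.log ((2 - δ) / δ))
            * ((1 + δ) - 1 - δ)
        + θc * δ ^ 2 / 6 + 11 * θ₀ * δ / (6 * (2 - δ))
        + θ₀ * δ / 2 * Real.log ((2 - δ) / δ) + θ₀ * Real.log (2 - δ) := by
    have hne : ¬ (1:ℝ) + δ ≤ 1 - δ := by linarith
    have hne2 : ¬ (1:ℝ) + δ ≤ 1 := by linarith
    simp only [f2deltaAux, if_neg hne, if_neg hne2, if_pos (le_refl ((1:ℝ) + δ))]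
    field_simp
    ring
  rcases lt_trichotomy c (1 - δ) with h1 | h1 | h1
  · -- interior of first piece
    have hg : gdeltaAux θ₀ θc δ c = θ₀ / 2 * Real.log ((1 + c) / (1 - c)) := by
      simp only [gdeltaAux, if_pos h1.le]
    rw [hg]
    refine (f2_hasDerivAt θ₀ hc (by linarith)).congr_of_eventuallyEq ?_
    filter_upwards [Iio_mem_nhds h1] with x (hx : x < 1 - δ)
    simp only [f2deltaAux, if_pos hx.le]
  · -- junction at 1 - δ
    subst h1
    have hg : gdeltaAux θ₀ θc δ (1 - δ) =
        θ₀ / 2 * Real.log ((1 + (1 - δ)) / (1 - (1 - δ))) := by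
      simp only [gdeltaAux, if_pos (le_refl (1 - δ))]
    rw [hg]
    have hleft : HasDerivWithinAt (f2deltaAux θ₀ θc δ)
        (θ₀ / 2 * Real.log ((1 + (1 - δ)) / (1 - (1 - δ)))) (Iic (1 - δ)) (1 - δ) := by
      refine ((f2_hasDerivAt θ₀ (by linarith) (by linarith)).hasDerivWithinAt).congr_of_eventuallyEq
        ?_ ?_
      · filter_upwards [self_mem_nhdsWithin] with x (hx : x ≤ 1 - δ)
        simp only [f2deltaAux, if_pos hx]
      · simp only [f2deltaAux, if_pos (le_refl (1 - δ))]
    have hright : HasDerivWithinAt (f2deltaAux θ₀ θc δ)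
        (θ₀ / 2 * Real.log ((1 + (1 - δ)) / (1 - (1 - δ)))) (Ioi (1 - δ)) (1 - δ) := by
      have hq : HasDerivAt (fun c => θ₀ / (2 * δ * (2 - δ)) * (c - 1 + δ) ^ 2
          + θ₀ / 2 * Real.log (2 / δ - 1) * (c - 1 + δ) + f2 θ₀ (1 - δ))
          (θ₀ / 2 * Real.log ((1 + (1 - δ)) / (1 - (1 - δ)))) (1 - δ) := by
        refine hasDerivAt_quad _ _ _ _ _ _ (hu1 _) ?_
        rw [show ((1:ℝ) + (1 - δ)) / (1 - (1 - δ)) = 2 / δ - 1 by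
          rw [hlogarg, show (1:ℝ) + (1 - δ) = 2 - δ by ring, show (1:ℝ) - (1 - δ) = δ by ring]]
        ring
      refine hq.hasDerivWithinAt.congr_of_eventuallyEq ?_ hval1
      filter_upwards [Ioo_mem_nhdsGT (show (1:ℝ) - δ < 1 by linarith)] with x (hx : x ∈ Ioo (1 - δ) 1)
      simp only [f2deltaAux, if_neg (not_le.2 hx.1), if_pos hx.2.le]
    have := hleft.union hright
    rw [Iic_union_Ioi] at this
    exact hasDerivWithinAt_univ.mp this
  rcases lt_trichotomy c 1 with h2 | h2 | h2
  · -- interior of second piece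
    have hg : gdeltaAux θ₀ θc δ c =
        θ₀ / (δ * (2 - δ)) * (c - 1 + δ) + θ₀ / 2 * Real.log ((2 - δ) / δ) := by
      simp only [gdeltaAux, if_neg (not_le.2 h1), if_pos h2.le]
    rw [hg]
    have hq : HasDerivAt (fun c => θ₀ / (2 * δ * (2 - δ)) * (c - 1 + δ) ^ 2
        + θ₀ / 2 * Real.log (2 / δ - 1) * (c - 1 + δ) + f2 θ₀ (1 - δ))
        (θ₀ / (δ * (2 - δ)) * (c - 1 + δ) + θ₀ / 2 * Real.log ((2 - δ) / δ)) c := by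
      refine hasDerivAt_quad _ _ _ _ _ _ (hu1 _) ?_
      rw [hlog2, hlog3]
      field_simp
    refine hq.congr_of_eventuallyEq ?_
    filter_upwards [Ioo_mem_nhds h1 h2] with x (hx : x ∈ Ioo (1 - δ) 1)
    simp only [f2deltaAux, if_neg (not_le.2 hx.1), if_pos hx.2.le]
  · -- junction at 1
    subst h2
    have hg : gdeltaAux θ₀ θc δ 1 =
        θ₀ / (δ * (2 - δ)) * (1 - 1 + δ) + θ₀ / 2 * Real.log ((2 - δ) / δ) := by
      simp only [gdeltaAux, if_neg (not_le.2 h1), if_pos (le_refl (1:ℝ))]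
    rw [hg]
    have hleft : HasDerivWithinAt (f2deltaAux θ₀ θc δ)
        (θ₀ / (δ * (2 - δ)) * (1 - 1 + δ) + θ₀ / 2 * Real.log ((2 - δ) / δ))
        (Iic 1) 1 := by
      have hq : HasDerivAt (fun c => θ₀ / (2 * δ * (2 - δ)) * (c - 1 + δ) ^ 2
          + θ₀ / 2 * Real.log (2 / δ - 1) * (c - 1 + δ) + f2 θ₀ (1 - δ))
          (θ₀ / (δ * (2 - δ)) * (1 - 1 + δ) + θ₀ / 2 * Real.log ((2 - δ) / δ)) 1 := by
        refine hasDerivAt_quad _ _ _ _ _ _ (hu1 _) ?_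
        rw [hlog2, hlog3]
        field_simp
      refine hq.hasDerivWithinAt.congr_of_eventuallyEq ?_ ?_
      · filter_upwards [Ioc_mem_nhdsLE (show (1:ℝ) - δ < 1 by linarith)] with x (hx : x ∈ Ioc (1 - δ) 1)
        simp only [f2deltaAux, if_neg (not_le.2 hx.1), if_pos hx.2]
      · have hne : ¬ (1:ℝ) ≤ 1 - δ := by linarith
        simp only [f2deltaAux, if_neg hne, if_pos (le_refl (1:ℝ))]
    have hright : HasDerivWithinAt (f2deltaAux θ₀ θc δ)
        (θ₀ / (δ * (2 - δ)) * (1 - 1 + δ) + θ₀ / 2 * Real.log ((2 - δ) / δ))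
        (Ioi 1) 1 := by
      have hq : HasDerivAt (fun c => (θc * δ * (2 - δ) - θ₀) / (6 * δ ^ 2 * (2 - δ)) * (c - 1) ^ 3
          + θ₀ / (2 * δ * (2 - δ)) * (c - 1) ^ 2
          + (θ₀ / (2 - δ) + θ₀ / 2 * Real.log ((2 - δ) / δ)) * (c - 1)
          + δ * θ₀ / (2 * (2 - δ)) + θ₀ * Real.log (2 - δ))
          (θ₀ / (δ * (2 - δ)) * (1 - 1 + δ) + θ₀ / 2 * Real.log ((2 - δ) / δ)) 1 := by
        refine hasDerivAt_cubic _ _ _ _ _ _ _ _ (hu2 _) ?_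
        field_simp
        ring
      refine hq.hasDerivWithinAt.congr_of_eventuallyEq ?_ hval2
      filter_upwards [Ioo_mem_nhdsGT (show (1:ℝ) < 1 + δ by linarith)] with x (hx : x ∈ Ioo 1 (1 + δ))
      have hne : ¬ x ≤ 1 - δ := by have := hx.1; push_neg; linarith
      simp only [f2deltaAux, if_neg hne, if_neg (not_le.2 hx.1), if_pos hx.2.le]
    have := hleft.union hright
    rw [Iic_union_Ioi] at this
    exact hasDerivWithinAt_univ.mp this
  rcases lt_trichotomy c (1 + δ) with h3 | h3 | h3
  · -- interior of third piece
    have hne1 : ¬ c ≤ 1 - δ := by push_neg; linarith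
    have hg : gdeltaAux θ₀ θc δ c =
        (θc * δ * (2 - δ) - θ₀) / (2 * δ ^ 2 * (2 - δ)) * (c - 1) ^ 2
          + θ₀ / (δ * (2 - δ)) * (c - 1) + θ₀ / (2 - δ)
          + θ₀ / 2 * Real.log ((2 - δ) / δ) := by
      simp only [gdeltaAux, if_neg hne1, if_neg (not_le.2 h2), if_pos h3.le]
    rw [hg]
    have hq : HasDerivAt (fun c => (θc * δ * (2 - δ) - θ₀) / (6 * δ ^ 2 * (2 - δ)) * (c - 1) ^ 3
        + θ₀ / (2 * δ * (2 - δ)) * (c - 1) ^ 2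
        + (θ₀ / (2 - δ) + θ₀ / 2 * Real.log ((2 - δ) / δ)) * (c - 1)
        + δ * θ₀ / (2 * (2 - δ)) + θ₀ * Real.log (2 - δ))
        ((θc * δ * (2 - δ) - θ₀) / (2 * δ ^ 2 * (2 - δ)) * (c - 1) ^ 2
          + θ₀ / (δ * (2 - δ)) * (c - 1) + θ₀ / (2 - δ)
          + θ₀ / 2 * Real.log ((2 - δ) / δ)) c := by
      refine hasDerivAt_cubic _ _ _ _ _ _ _ _ (hu2 _) ?_
      field_simp
      ring
    refine hq.congr_of_eventuallyEq ?_
    filter_upwards [Ioo_mem_nhds h2 h3] with x (hx : x ∈ Ioo 1 (1 + δ))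
    have hne : ¬ x ≤ 1 - δ := by have := hx.1; push_neg; linarith
    simp only [f2deltaAux, if_neg hne, if_neg (not_le.2 hx.1), if_pos hx.2.le]
  · -- junction at 1 + δ
    subst h3
    have hne1 : ¬ (1:ℝ) + δ ≤ 1 - δ := by linarith
    have hg : gdeltaAux θ₀ θc δ (1 + δ) =
        (θc * δ * (2 - δ) - θ₀) / (2 * δ ^ 2 * (2 - δ)) * ((1 + δ) - 1) ^ 2
          + θ₀ / (δ * (2 - δ)) * ((1 + δ) - 1) + θ₀ / (2 - δ)
          + θ₀ / 2 * Real.log ((2 - δ) / δ) := by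
      simp only [gdeltaAux, if_neg hne1, if_neg (not_le.2 h2), if_pos (le_refl ((1:ℝ) + δ))]
    rw [hg]
    set D := (θc * δ * (2 - δ) - θ₀) / (2 * δ ^ 2 * (2 - δ)) * ((1 + δ) - 1) ^ 2
        + θ₀ / (δ * (2 - δ)) * ((1 + δ) - 1) + θ₀ / (2 - δ)
        + θ₀ / 2 * Real.log ((2 - δ) / δ) with hD
    have hleft : HasDerivWithinAt (f2deltaAux θ₀ θc δ) D (Iic (1 + δ)) (1 + δ) := by
      have hq : HasDerivAt (fun c => (θc * δ * (2 - δ) - θ₀) / (6 * δ ^ 2 * (2 - δ)) * (c - 1) ^ 3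
          + θ₀ / (2 * δ * (2 - δ)) * (c - 1) ^ 2
          + (θ₀ / (2 - δ) + θ₀ / 2 * Real.log ((2 - δ) / δ)) * (c - 1)
          + δ * θ₀ / (2 * (2 - δ)) + θ₀ * Real.log (2 - δ)) D (1 + δ) := by
        refine hasDerivAt_cubic _ _ _ _ _ _ _ _ (hu2 _) ?_
        rw [hD]
        field_simp
        ring
      refine hq.hasDerivWithinAt.congr_of_eventuallyEq ?_ ?_
      · filter_upwards [Ioc_mem_nhdsLE (show (1:ℝ) < 1 + δ by linarith)] with x (hx : x ∈ Ioc 1 (1 + δ))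
        have hne : ¬ x ≤ 1 - δ := by have := hx.1; push_neg; linarith
        simp only [f2deltaAux, if_neg hne, if_neg (not_le.2 hx.1), if_pos hx.2]
      · have hne2 : ¬ (1:ℝ) + δ ≤ 1 := by linarith
        simp only [f2deltaAux, if_neg hne1, if_neg hne2, if_pos (le_refl ((1:ℝ) + δ))]
    have hright : HasDerivWithinAt (f2deltaAux θ₀ θc δ) D (Ioi (1 + δ)) (1 + δ) := by
      have hq : HasDerivAt (fun c => θc / 2 * (c - 1 - δ) ^ 2
          + (θc * δ / 2 + 3 * θ₀ / (2 * (2 - δ)) + θ₀ / 2 * Real.log ((2 - δ) / δ))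
              * (c - 1 - δ)
          + θc * δ ^ 2 / 6 + 11 * θ₀ * δ / (6 * (2 - δ))
          + θ₀ * δ / 2 * Real.log ((2 - δ) / δ) + θ₀ * Real.log (2 - δ)) D (1 + δ) := by
        refine hasDerivAt_quad4 _ _ _ _ _ _ _ _ _ (hu3 _) ?_
        rw [hD]
        field_simp
        ring
      refine hq.hasDerivWithinAt.congr_of_eventuallyEq ?_ hval3
      filter_upwards [self_mem_nhdsWithin] with x (hx' : (1:ℝ) + δ < x)
      have hne : ¬ x ≤ 1 - δ := by push_neg; linarith
      have hne2 : ¬ x ≤ 1 := by push_neg; linarith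
      have hne3 : ¬ x ≤ 1 + δ := by push_neg; linarith
      simp only [f2deltaAux, if_neg hne, if_neg hne2, if_neg hne3]
    have := hleft.union hright
    rw [Iic_union_Ioi] at this
    exact hasDerivWithinAt_univ.mp this
  · -- interior of fourth piece
    have hne1 : ¬ c ≤ 1 - δ := by push_neg; linarith
    have hg : gdeltaAux θ₀ θc δ c = θc * (c - 1 - δ) + θc * δ / 2
        + 3 * θ₀ / (2 * (2 - δ)) + θ₀ / 2 * Real.log ((2 - δ) / δ) := by
      simp only [gdeltaAux, if_neg hne1, if_neg (not_le.2 h2), if_neg (not_le.2 h3)]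
    rw [hg]
    have hq : HasDerivAt (fun c => θc / 2 * (c - 1 - δ) ^ 2
        + (θc * δ / 2 + 3 * θ₀ / (2 * (2 - δ)) + θ₀ / 2 * Real.log ((2 - δ) / δ))
            * (c - 1 - δ)
        + θc * δ ^ 2 / 6 + 11 * θ₀ * δ / (6 * (2 - δ))
        + θ₀ * δ / 2 * Real.log ((2 - δ) / δ) + θ₀ * Real.log (2 - δ))
        (θc * (c - 1 - δ) + θc * δ / 2 + 3 * θ₀ / (2 * (2 - δ))
          + θ₀ / 2 * Real.log ((2 - δ) / δ)) c := by
      refine hasDerivAt_quad4 _ _ _ _ _ _ _ _ _ (hu3 _) ?_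
      ring
    refine hq.congr_of_eventuallyEq ?_
    filter_upwards [Ioi_mem_nhds h3] with x (hx : (1:ℝ) + δ < x)
    have hne : ¬ x ≤ 1 - δ := by push_neg; linarith
    have hne2 : ¬ x ≤ 1 := by push_neg; linarith
    have hne3 : ¬ x ≤ 1 + δ := not_le.2 hx
    simp only [f2deltaAux, if_neg hne, if_neg hne2, if_neg hne3]

lemma f2delta_hasDerivAt_all (θ₀ θc δ : ℝ) (hδ0 : 0 < δ) (hδ1 : δ < 1) (c : ℝ) :
    HasDerivAt (f2delta θ₀ θc δ) (gdelta θ₀ θc δ c) c := by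
  rcases lt_trichotomy c 0 with hc | hc | hc
  · -- negative
    have h := aux_hasDerivAt θ₀ θc δ hδ0 hδ1 (show (-1:ℝ) < -c by linarith)
    have hneg : HasDerivAt (fun x : ℝ => -x) (-1) c := hasDerivAt_neg c
    have hcomp := h.comp c hneg
    have hg : gdelta θ₀ θc δ c = -gdeltaAux θ₀ θc δ (-c) := by
      simp only [gdelta, if_neg (not_le.2 hc)]
    rw [hg]
    have hcomp' : HasDerivAt (fun x : ℝ => f2deltaAux θ₀ θc δ (-x))
        (-gdeltaAux θ₀ θc δ (-c)) c := by
      refine hcomp.congr_deriv ?_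
      ring
    refine hcomp'.congr_of_eventuallyEq ?_
    filter_upwards [Iio_mem_nhds hc] with x (hx : x < 0)
    simp only [f2delta, abs_of_neg hx]
  · -- zero
    subst hc
    have hδ1' : (0:ℝ) < 1 - δ := by linarith
    have hg : gdelta θ₀ θc δ 0 = θ₀ / 2 * Real.log ((1 + 0) / (1 - 0)) := by
      simp only [gdelta, if_pos (le_refl (0:ℝ)), gdeltaAux, if_pos hδ1'.le]
    rw [hg]
    refine (f2_hasDerivAt θ₀ (by norm_num) (by norm_num)).congr_of_eventuallyEq ?_
    filter_upwards [Ioo_mem_nhds (show -(1 - δ) < (0:ℝ) by linarith) hδ1'] with x (hx : x ∈ Ioo (-(1 - δ)) (1 - δ))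
    have habs : |x| ≤ 1 - δ := abs_le.2 ⟨by linarith [hx.1], hx.2.le⟩
    have : f2delta θ₀ θc δ x = f2 θ₀ |x| := by
      simp only [f2delta, f2deltaAux, if_pos habs]
    rw [this]
    rcases abs_choice x with h | h
    · rw [h]
    · rw [h, f2]
      rw [show (1:ℝ) + -x = 1 - x by ring, show (1:ℝ) - -x = 1 + x by ring, f2]
      ring
  · -- positive
    have h := aux_hasDerivAt θ₀ θc δ hδ0 hδ1 (show (-1:ℝ) < c by linarith)
    have hg : gdelta θ₀ θc δ c = gdeltaAux θ₀ θc δ c := by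
      simp only [gdelta, if_pos hc.le]
    rw [hg]
    refine h.congr_of_eventuallyEq ?_
    filter_upwards [Ioi_mem_nhds hc] with x (hx : 0 < x)
    simp only [f2delta, abs_of_pos hx]

/-- `f₂^δ` is differentiable on `ℝ` and its derivative equals the
odd extension of the explicit piecewise function `g^δ`:
`deriv f₂^δ (c) = g^δ(c)` for `c ≥ 0` and `deriv f₂^δ (c) = −g^δ(−c)` for `c < 0`. -/
theorem f2delta_hasDeriv (θ₀ θc δ : ℝ) (hθ₀ : 0 < θ₀) (hθ : θ₀ < θc)
    (hδ : δ ∈ Set.Ioo (0:ℝ) 1) :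
    Differentiable ℝ (f2delta θ₀ θc δ) ∧
      (∀ c : ℝ, 0 ≤ c → deriv (f2delta θ₀ θc δ) c = gdeltaAux θ₀ θc δ c) ∧
      (∀ c : ℝ, c < 0 → deriv (f2delta θ₀ θc δ) c = -gdeltaAux θ₀ θc δ (-c)) := by
  obtain ⟨hδ0, hδ1⟩ := hδ
  have key := f2delta_hasDerivAt_all θ₀ θc δ hδ0 hδ1
  refine ⟨fun c => (key c).differentiableAt, fun c hc => ?_, fun c hc => ?_⟩
  · rw [(key c).deriv, gdelta, if_pos hc]
  · rw [(key c).deriv, gdelta, if_neg (not_le.2 hc)]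
end

section
/- For all real numbers θ₀, θ_c with 0 < θ₀ < θ_c and every δ ∈ (0,1), the odd extension g̃^δ is differentiable at every point of ℝ and its derivative equals the even function h^δ; in particular h^δ is the second derivative of the regularized potential. -/
open Real Set Filter

private lemma glueDeriv {f fl fr : ℝ → ℝ} {a d : ℝ}
    (hl : ∀ᶠ x in nhds a, x ≤ a → f x = fl x)
    (hr : ∀ᶠ x in nhds a, a ≤ x → f x = fr x)
    (hfl : HasDerivAt fl d a) (hfr : HasDerivAt fr d a) :
    HasDerivAt f d a := by
  have hIic : HasDerivWithinAt f d (Set.Iic a) a := by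
    refine hfl.hasDerivWithinAt.congr_of_eventuallyEq ?_ (hl.self_of_nhds le_rfl)
    filter_upwards [hl.filter_mono nhdsWithin_le_nhds, self_mem_nhdsWithin] with x h hx
    exact h hx
  have hIci : HasDerivWithinAt f d (Set.Ici a) a := by
    refine hfr.hasDerivWithinAt.congr_of_eventuallyEq ?_ (hr.self_of_nhds le_rfl)
    filter_upwards [hr.filter_mono nhdsWithin_le_nhds, self_mem_nhdsWithin] with x h hx
    exact h hx
  have h := hIic.union hIci
  rwa [Set.Iic_union_Ici, hasDerivWithinAt_univ] at h

private lemma hasDerivAt_logdiff (θ₀ c : ℝ) (h1 : 0 < 1 + c) (h2 : 0 < 1 - c) :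
    HasDerivAt (fun x : ℝ => θ₀ / 2 * (Real.log (1 + x) - Real.log (1 - x)))
      (θ₀ / (1 - c ^ 2)) c := by
  have hu : HasDerivAt (fun x : ℝ => 1 + x) 1 c := (hasDerivAt_id c).const_add 1
  have hv : HasDerivAt (fun x : ℝ => 1 - x) (-1) c := by
    simpa using (hasDerivAt_id c).const_sub 1
  have h := ((hu.log h1.ne').sub (hv.log h2.ne')).const_mul (θ₀ / 2)
  refine h.congr_deriv ?_
  rw [show (1:ℝ) - c ^ 2 = (1 + c) * (1 - c) by ring]
  field_simp
  ring

private lemma hasDerivAt_f2 (θ₀ c : ℝ) (h1 : 0 < 1 + c) (h2 : 0 < 1 - c) :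
    HasDerivAt (f2 θ₀) (θ₀ / 2 * (Real.log (1 + c) - Real.log (1 - c))) c := by
  have hu : HasDerivAt (fun x : ℝ => 1 + x) 1 c := (hasDerivAt_id c).const_add 1
  have hv : HasDerivAt (fun x : ℝ => 1 - x) (-1) c := by
    simpa using (hasDerivAt_id c).const_sub 1
  have ha := hu.mul (hu.log h1.ne')
  have hb := hv.mul (hv.log h2.ne')
  have h := (ha.add hb).const_mul (θ₀ / 2)
  have key : HasDerivAt
      (fun x : ℝ => θ₀ / 2 * ((1 + x) * Real.log (1 + x) + (1 - x) * Real.log (1 - x)))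
      (θ₀ / 2 * (Real.log (1 + c) - Real.log (1 - c))) c := by
    refine h.congr_deriv ?_
    field_simp
    ring
  exact key

private lemma A_aux {θ₀ θc δ : ℝ} (hθ₀ : 0 < θ₀) (hδ0 : 0 < δ) (hδ1 : δ < 1)
    {c : ℝ} (hc : -1 < c) :
    HasDerivAt (gdeltaAux θ₀ θc δ) (hdeltaAux θ₀ θc δ c) c := by
  have hδ2 : (0:ℝ) < 2 - δ := by linarith
  -- piece 2 derivative builder
  have P2d : ∀ a : ℝ, HasDerivAt
      (fun x : ℝ => θ₀ / (δ * (2 - δ)) * (x - 1 + δ) + θ₀ / 2 * Real.log ((2 - δ) / δ))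
      (θ₀ / (δ * (2 - δ))) a := by
    intro a
    have h := ((((hasDerivAt_id a).sub_const 1).add_const δ).const_mul
      (θ₀ / (δ * (2 - δ)))).add_const (θ₀ / 2 * Real.log ((2 - δ) / δ))
    simpa using h
  -- piece 3 derivative builder
  have P3d : ∀ a : ℝ, HasDerivAt
      (fun x : ℝ => (θc * δ * (2 - δ) - θ₀) / (2 * δ ^ 2 * (2 - δ)) * (x - 1) ^ 2
        + θ₀ / (δ * (2 - δ)) * (x - 1) + θ₀ / (2 - δ) + θ₀ / 2 * Real.log ((2 - δ) / δ))
      ((θc * δ * (2 - δ) - θ₀) / (2 * δ ^ 2 * (2 - δ)) * (2 * (a - 1))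
        + θ₀ / (δ * (2 - δ))) a := by
    intro a
    have h1 : HasDerivAt (fun x : ℝ => x - 1) 1 a := (hasDerivAt_id a).sub_const 1
    have h2 : HasDerivAt (fun x : ℝ => (x - 1) ^ 2) (2 * (a - 1)) a := by
      exact (h1.pow 2).congr_deriv (by norm_num)
    have h := (((h2.const_mul ((θc * δ * (2 - δ) - θ₀) / (2 * δ ^ 2 * (2 - δ)))).add
      (h1.const_mul (θ₀ / (δ * (2 - δ))))).add_const (θ₀ / (2 - δ))).add_const
      (θ₀ / 2 * Real.log ((2 - δ) / δ))
    simpa using h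
  -- piece 4 derivative builder
  have P4d : ∀ a : ℝ, HasDerivAt
      (fun x : ℝ => θc * (x - 1 - δ) + θc * δ / 2 + 3 * θ₀ / (2 * (2 - δ))
        + θ₀ / 2 * Real.log ((2 - δ) / δ)) θc a := by
    intro a
    have h := (((((hasDerivAt_id a).sub_const 1).sub_const δ).const_mul θc).add_const
      (θc * δ / 2)).add_const (3 * θ₀ / (2 * (2 - δ)))
    simpa using h.add_const (θ₀ / 2 * Real.log ((2 - δ) / δ))
  rcases lt_trichotomy c (1 - δ) with h1 | h1 | h1
  · -- c < 1 - δ : interior log piece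
    have hev : gdeltaAux θ₀ θc δ =ᶠ[nhds c]
        fun x : ℝ => θ₀ / 2 * (Real.log (1 + x) - Real.log (1 - x)) := by
      filter_upwards [isOpen_Ioo.mem_nhds (show c ∈ Ioo (-1 : ℝ) (1 - δ) from ⟨hc, h1⟩)]
        with x hx
      rw [gdeltaAux, if_pos hx.2.le,
        Real.log_div (by linarith [hx.1] : (1:ℝ) + x ≠ 0) (by nlinarith [hx.2] : (1:ℝ) - x ≠ 0)]
    have hd : hdeltaAux θ₀ θc δ c = θ₀ / (1 - c ^ 2) := by
      rw [hdeltaAux, if_pos h1.le]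
    rw [hd]
    exact (hasDerivAt_logdiff θ₀ c (by linarith) (by linarith)).congr_of_eventuallyEq hev
  · -- c = 1 - δ : junction
    subst h1
    have hd : hdeltaAux θ₀ θc δ (1 - δ) = θ₀ / (δ * (2 - δ)) := by
      rw [hdeltaAux, if_pos le_rfl, show (1:ℝ) - (1 - δ) ^ 2 = δ * (2 - δ) by ring]
    rw [hd]
    refine glueDeriv
      (fl := fun x : ℝ => θ₀ / 2 * (Real.log (1 + x) - Real.log (1 - x)))
      (fr := fun x : ℝ => θ₀ / (δ * (2 - δ)) * (x - 1 + δ) + θ₀ / 2 * Real.log ((2 - δ) / δ))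
      ?_ ?_ ?_ (P2d _)
    · filter_upwards [eventually_gt_nhds (show (-1:ℝ) < 1 - δ by linarith)] with x hx hxle
      rw [gdeltaAux, if_pos hxle,
        Real.log_div (by linarith : (1:ℝ) + x ≠ 0) (by linarith : (1:ℝ) - x ≠ 0)]
    · filter_upwards [eventually_lt_nhds (show (1:ℝ) - δ < 1 by linarith)] with x hx hxge
      rcases eq_or_lt_of_le hxge with he | hlt
      · rw [gdeltaAux, ← he, if_pos le_rfl, show (1:ℝ) + (1 - δ) = 2 - δ by ring,
          show (1:ℝ) - (1 - δ) = δ by ring]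
        ring
      · rw [gdeltaAux, if_neg (not_le.2 hlt), if_pos hx.le]
    · have h := hasDerivAt_logdiff θ₀ (1 - δ) (by linarith) (by linarith)
      rw [show (1:ℝ) - (1 - δ) ^ 2 = δ * (2 - δ) by ring] at h
      exact h
  rcases lt_trichotomy c 1 with h2 | h2 | h2
  · -- 1 - δ < c < 1 : interior piece 2
    have hev : gdeltaAux θ₀ θc δ =ᶠ[nhds c]
        (fun x : ℝ => θ₀ / (δ * (2 - δ)) * (x - 1 + δ) + θ₀ / 2 * Real.log ((2 - δ) / δ)) := by
      filter_upwards [eventually_gt_nhds h1, eventually_lt_nhds h2] with x hx1 hx2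
      rw [gdeltaAux, if_neg (not_le.2 hx1), if_pos hx2.le]
    have hd : hdeltaAux θ₀ θc δ c = θ₀ / (δ * (2 - δ)) := by
      rw [hdeltaAux, if_neg (not_le.2 h1), if_pos h2.le]
    rw [hd]
    exact (P2d c).congr_of_eventuallyEq hev
  · -- c = 1 : junction
    subst h2
    have hd : hdeltaAux θ₀ θc δ 1 = θ₀ / (δ * (2 - δ)) := by
      rw [hdeltaAux, if_neg (not_le.2 (by linarith : (1:ℝ) - δ < 1)), if_pos le_rfl]
    rw [hd]
    refine glueDeriv
      (fl := fun x : ℝ => θ₀ / (δ * (2 - δ)) * (x - 1 + δ) + θ₀ / 2 * Real.log ((2 - δ) / δ))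
      (fr := fun x : ℝ => (θc * δ * (2 - δ) - θ₀) / (2 * δ ^ 2 * (2 - δ)) * (x - 1) ^ 2
        + θ₀ / (δ * (2 - δ)) * (x - 1) + θ₀ / (2 - δ) + θ₀ / 2 * Real.log ((2 - δ) / δ))
      ?_ ?_ (P2d _) ?_
    · filter_upwards [eventually_gt_nhds (show (1:ℝ) - δ < 1 by linarith)] with x hx hxle
      rw [gdeltaAux, if_neg (not_le.2 hx), if_pos hxle]
    · filter_upwards [eventually_lt_nhds (show (1:ℝ) < 1 + δ by linarith)] with x hx hxge
      rcases eq_or_lt_of_le hxge with he | hlt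
      · rw [gdeltaAux, ← he, if_neg (not_le.2 (by linarith : (1:ℝ) - δ < 1)), if_pos le_rfl]
        field_simp
        ring
      · rw [gdeltaAux, if_neg (not_le.2 (by linarith : (1:ℝ) - δ < x)),
          if_neg (not_le.2 hlt), if_pos hx.le]
    · have h := P3d 1
      convert h using 1
      ring
  rcases lt_trichotomy c (1 + δ) with h3 | h3 | h3
  · -- 1 < c < 1 + δ : interior piece 3
    have hev : gdeltaAux θ₀ θc δ =ᶠ[nhds c]
        (fun x : ℝ => (θc * δ * (2 - δ) - θ₀) / (2 * δ ^ 2 * (2 - δ)) * (x - 1) ^ 2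
          + θ₀ / (δ * (2 - δ)) * (x - 1) + θ₀ / (2 - δ) + θ₀ / 2 * Real.log ((2 - δ) / δ)) := by
      filter_upwards [eventually_gt_nhds h2, eventually_lt_nhds h3] with x hx1 hx2
      rw [gdeltaAux, if_neg (not_le.2 (by linarith : (1:ℝ) - δ < x)),
        if_neg (not_le.2 hx1), if_pos hx2.le]
    have hd : hdeltaAux θ₀ θc δ c
        = (θc * δ * (2 - δ) - θ₀) / (δ ^ 2 * (2 - δ)) * (c - 1) + θ₀ / (δ * (2 - δ)) := by
      rw [hdeltaAux, if_neg (not_le.2 (by linarith : (1:ℝ) - δ < c)),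
        if_neg (not_le.2 h2), if_pos h3.le]
    rw [hd]
    refine (HasDerivAt.congr_of_eventuallyEq ?_ hev)
    refine (P3d c).congr_deriv ?_
    field_simp
  · -- c = 1 + δ : junction
    subst h3
    have hd : hdeltaAux θ₀ θc δ (1 + δ) = θc := by
      rw [hdeltaAux, if_neg (not_le.2 (by linarith : (1:ℝ) - δ < 1 + δ)),
        if_neg (not_le.2 (by linarith : (1:ℝ) < 1 + δ)), if_pos le_rfl]
      field_simp
      ring
    rw [hd]
    refine glueDeriv
      (fl := fun x : ℝ => (θc * δ * (2 - δ) - θ₀) / (2 * δ ^ 2 * (2 - δ)) * (x - 1) ^ 2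
        + θ₀ / (δ * (2 - δ)) * (x - 1) + θ₀ / (2 - δ) + θ₀ / 2 * Real.log ((2 - δ) / δ))
      (fr := fun x : ℝ => θc * (x - 1 - δ) + θc * δ / 2 + 3 * θ₀ / (2 * (2 - δ))
        + θ₀ / 2 * Real.log ((2 - δ) / δ))
      ?_ ?_ ?_ (P4d _)
    · filter_upwards [eventually_gt_nhds (show (1:ℝ) < 1 + δ by linarith)] with x hx hxle
      rw [gdeltaAux, if_neg (not_le.2 (by linarith : (1:ℝ) - δ < x)),
        if_neg (not_le.2 hx), if_pos hxle]
    · filter_upwards [] with x hxge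
      rcases eq_or_lt_of_le hxge with he | hlt
      · rw [gdeltaAux, ← he, if_neg (not_le.2 (by linarith : (1:ℝ) - δ < 1 + δ)),
          if_neg (not_le.2 (by linarith : (1:ℝ) < 1 + δ)), if_pos le_rfl]
        field_simp
        ring
      · rw [gdeltaAux, if_neg (not_le.2 (by linarith : (1:ℝ) - δ < x)),
          if_neg (not_le.2 (by linarith : (1:ℝ) < x)), if_neg (not_le.2 hlt)]
    · convert P3d (1 + δ) using 1
      field_simp
      ring
  · -- c > 1 + δ : interior piece 4
    have hev : gdeltaAux θ₀ θc δ =ᶠ[nhds c]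
        (fun x : ℝ => θc * (x - 1 - δ) + θc * δ / 2 + 3 * θ₀ / (2 * (2 - δ))
          + θ₀ / 2 * Real.log ((2 - δ) / δ)) := by
      filter_upwards [eventually_gt_nhds h3] with x hx
      rw [gdeltaAux, if_neg (not_le.2 (by linarith : (1:ℝ) - δ < x)),
        if_neg (not_le.2 (by linarith : (1:ℝ) < x)), if_neg (not_le.2 hx)]
    have hd : hdeltaAux θ₀ θc δ c = θc := by
      rw [hdeltaAux, if_neg (not_le.2 (by linarith : (1:ℝ) - δ < c)),
        if_neg (not_le.2 (by linarith : (1:ℝ) < c)), if_neg (not_le.2 h3)]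
    rw [hd]
    exact (P4d c).congr_of_eventuallyEq hev

set_option maxHeartbeats 1000000 in
private lemma B_aux {θ₀ θc δ : ℝ} (hθ₀ : 0 < θ₀) (hδ0 : 0 < δ) (hδ1 : δ < 1)
    {c : ℝ} (hc : -1 < c) :
    HasDerivAt (f2deltaAux θ₀ θc δ) (gdeltaAux θ₀ θc δ c) c := by
  have hδ2 : (0:ℝ) < 2 - δ := by linarith
  have hlog : Real.log (2 / δ - 1) = Real.log ((2 - δ) / δ) := by
    rw [show (2:ℝ) / δ - 1 = (2 - δ) / δ by field_simp]
  -- piece 2 derivative builder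
  have P2d : ∀ a : ℝ, HasDerivAt
      (fun x : ℝ => θ₀ / (2 * δ * (2 - δ)) * (x - 1 + δ) ^ 2
        + θ₀ / 2 * Real.log (2 / δ - 1) * (x - 1 + δ) + f2 θ₀ (1 - δ))
      (θ₀ / (2 * δ * (2 - δ)) * (2 * (a - 1 + δ)) + θ₀ / 2 * Real.log (2 / δ - 1)) a := by
    intro a
    have h1 : HasDerivAt (fun x : ℝ => x - 1 + δ) 1 a :=
      ((hasDerivAt_id a).sub_const 1).add_const δ
    have h2 : HasDerivAt (fun x : ℝ => (x - 1 + δ) ^ 2) (2 * (a - 1 + δ)) a := by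
      exact (h1.pow 2).congr_deriv (by norm_num)
    have h := ((h2.const_mul (θ₀ / (2 * δ * (2 - δ)))).add
      (h1.const_mul (θ₀ / 2 * Real.log (2 / δ - 1)))).add_const (f2 θ₀ (1 - δ))
    simpa using h
  -- piece 3 derivative builder
  have P3d : ∀ a : ℝ, HasDerivAt
      (fun x : ℝ => (θc * δ * (2 - δ) - θ₀) / (6 * δ ^ 2 * (2 - δ)) * (x - 1) ^ 3
        + θ₀ / (2 * δ * (2 - δ)) * (x - 1) ^ 2
        + (θ₀ / (2 - δ) + θ₀ / 2 * Real.log ((2 - δ) / δ)) * (x - 1)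
        + δ * θ₀ / (2 * (2 - δ)) + θ₀ * Real.log (2 - δ))
      ((θc * δ * (2 - δ) - θ₀) / (6 * δ ^ 2 * (2 - δ)) * (3 * (a - 1) ^ 2)
        + θ₀ / (2 * δ * (2 - δ)) * (2 * (a - 1))
        + (θ₀ / (2 - δ) + θ₀ / 2 * Real.log ((2 - δ) / δ))) a := by
    intro a
    have h1 : HasDerivAt (fun x : ℝ => x - 1) 1 a := (hasDerivAt_id a).sub_const 1
    have h2 : HasDerivAt (fun x : ℝ => (x - 1) ^ 2) (2 * (a - 1)) a := by
      exact (h1.pow 2).congr_deriv (by norm_num)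
    have h3 : HasDerivAt (fun x : ℝ => (x - 1) ^ 3) (3 * (a - 1) ^ 2) a := by
      exact (h1.pow 3).congr_deriv (by norm_num)
    have h := ((((h3.const_mul ((θc * δ * (2 - δ) - θ₀) / (6 * δ ^ 2 * (2 - δ)))).add
      (h2.const_mul (θ₀ / (2 * δ * (2 - δ))))).add
      (h1.const_mul (θ₀ / (2 - δ) + θ₀ / 2 * Real.log ((2 - δ) / δ)))).add_const
      (δ * θ₀ / (2 * (2 - δ)))).add_const (θ₀ * Real.log (2 - δ))
    simpa using h
  -- piece 4 derivative builder
  have P4d : ∀ a : ℝ, HasDerivAt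
      (fun x : ℝ => θc / 2 * (x - 1 - δ) ^ 2
        + (θc * δ / 2 + 3 * θ₀ / (2 * (2 - δ)) + θ₀ / 2 * Real.log ((2 - δ) / δ))
            * (x - 1 - δ)
        + θc * δ ^ 2 / 6 + 11 * θ₀ * δ / (6 * (2 - δ))
        + θ₀ * δ / 2 * Real.log ((2 - δ) / δ) + θ₀ * Real.log (2 - δ))
      (θc / 2 * (2 * (a - 1 - δ))
        + (θc * δ / 2 + 3 * θ₀ / (2 * (2 - δ)) + θ₀ / 2 * Real.log ((2 - δ) / δ))) a := by
    intro a
    have h1 : HasDerivAt (fun x : ℝ => x - 1 - δ) 1 a :=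
      ((hasDerivAt_id a).sub_const 1).sub_const δ
    have h2 : HasDerivAt (fun x : ℝ => (x - 1 - δ) ^ 2) (2 * (a - 1 - δ)) a := by
      exact (h1.pow 2).congr_deriv (by norm_num)
    have h := ((((((h2.const_mul (θc / 2)).add
      (h1.const_mul (θc * δ / 2 + 3 * θ₀ / (2 * (2 - δ)) + θ₀ / 2 * Real.log ((2 - δ) / δ)))).add_const
      (θc * δ ^ 2 / 6)).add_const (11 * θ₀ * δ / (6 * (2 - δ)))).add_const
      (θ₀ * δ / 2 * Real.log ((2 - δ) / δ))).add_const (θ₀ * Real.log (2 - δ)))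
    simpa using h
  rcases lt_trichotomy c (1 - δ) with h1 | h1 | h1
  · -- c < 1 - δ : interior f2 piece
    have hev : f2deltaAux θ₀ θc δ =ᶠ[nhds c] f2 θ₀ := by
      filter_upwards [eventually_lt_nhds h1] with x hx
      rw [f2deltaAux, if_pos hx.le]
    have hd : gdeltaAux θ₀ θc δ c = θ₀ / 2 * (Real.log (1 + c) - Real.log (1 - c)) := by
      rw [gdeltaAux, if_pos h1.le,
        Real.log_div (by linarith : (1:ℝ) + c ≠ 0) (by nlinarith : (1:ℝ) - c ≠ 0)]
    rw [hd]
    exact (hasDerivAt_f2 θ₀ c (by linarith) (by linarith)).congr_of_eventuallyEq hev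
  · -- c = 1 - δ : junction
    subst h1
    have hd : gdeltaAux θ₀ θc δ (1 - δ) = θ₀ / 2 * (Real.log (2 - δ) - Real.log δ) := by
      rw [gdeltaAux, if_pos le_rfl, show (1:ℝ) + (1 - δ) = 2 - δ by ring,
        show (1:ℝ) - (1 - δ) = δ by ring, Real.log_div hδ2.ne' hδ0.ne']
    rw [hd]
    refine glueDeriv (fl := f2 θ₀)
      (fr := fun x : ℝ => θ₀ / (2 * δ * (2 - δ)) * (x - 1 + δ) ^ 2
        + θ₀ / 2 * Real.log (2 / δ - 1) * (x - 1 + δ) + f2 θ₀ (1 - δ))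
      ?_ ?_ ?_ ?_
    · filter_upwards [] with x hxle
      rw [f2deltaAux, if_pos hxle]
    · filter_upwards [eventually_lt_nhds (show (1:ℝ) - δ < 1 by linarith)] with x hx hxge
      rcases eq_or_lt_of_le hxge with he | hlt
      · rw [f2deltaAux, ← he, if_pos le_rfl]
        ring
      · rw [f2deltaAux, if_neg (not_le.2 hlt), if_pos hx.le]
    · have h := hasDerivAt_f2 θ₀ (1 - δ) (by linarith) (by linarith)
      rw [show (1:ℝ) + (1 - δ) = 2 - δ by ring, show (1:ℝ) - (1 - δ) = δ by ring] at h
      exact h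
    · convert P2d (1 - δ) using 1
      rw [hlog, Real.log_div hδ2.ne' hδ0.ne']
      ring
  rcases lt_trichotomy c 1 with h2 | h2 | h2
  · -- 1 - δ < c < 1 : interior piece 2
    have hev : f2deltaAux θ₀ θc δ =ᶠ[nhds c]
        (fun x : ℝ => θ₀ / (2 * δ * (2 - δ)) * (x - 1 + δ) ^ 2
          + θ₀ / 2 * Real.log (2 / δ - 1) * (x - 1 + δ) + f2 θ₀ (1 - δ)) := by
      filter_upwards [eventually_gt_nhds h1, eventually_lt_nhds h2] with x hx1 hx2
      rw [f2deltaAux, if_neg (not_le.2 hx1), if_pos hx2.le]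
    have hd : gdeltaAux θ₀ θc δ c
        = θ₀ / (δ * (2 - δ)) * (c - 1 + δ) + θ₀ / 2 * Real.log ((2 - δ) / δ) := by
      rw [gdeltaAux, if_neg (not_le.2 h1), if_pos h2.le]
    rw [hd]
    refine HasDerivAt.congr_of_eventuallyEq ?_ hev
    refine (P2d c).congr_deriv ?_
    rw [hlog]
    generalize Real.log ((2 - δ) / δ) = A
    field_simp
  · -- c = 1 : junction
    subst h2
    have hd : gdeltaAux θ₀ θc δ 1
        = θ₀ / (δ * (2 - δ)) * (1 - 1 + δ) + θ₀ / 2 * Real.log ((2 - δ) / δ) := by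
      rw [gdeltaAux, if_neg (not_le.2 (by linarith : (1:ℝ) - δ < 1)), if_pos le_rfl]
    rw [hd]
    refine glueDeriv
      (fl := fun x : ℝ => θ₀ / (2 * δ * (2 - δ)) * (x - 1 + δ) ^ 2
        + θ₀ / 2 * Real.log (2 / δ - 1) * (x - 1 + δ) + f2 θ₀ (1 - δ))
      (fr := fun x : ℝ => (θc * δ * (2 - δ) - θ₀) / (6 * δ ^ 2 * (2 - δ)) * (x - 1) ^ 3
        + θ₀ / (2 * δ * (2 - δ)) * (x - 1) ^ 2
        + (θ₀ / (2 - δ) + θ₀ / 2 * Real.log ((2 - δ) / δ)) * (x - 1)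
        + δ * θ₀ / (2 * (2 - δ)) + θ₀ * Real.log (2 - δ))
      ?_ ?_ ?_ ?_
    · filter_upwards [eventually_gt_nhds (show (1:ℝ) - δ < 1 by linarith)] with x hx hxle
      rw [f2deltaAux, if_neg (not_le.2 hx), if_pos hxle]
    · filter_upwards [eventually_lt_nhds (show (1:ℝ) < 1 + δ by linarith)] with x hx hxge
      rcases eq_or_lt_of_le hxge with he | hlt
      · rw [f2deltaAux, ← he, if_neg (not_le.2 (by linarith : (1:ℝ) - δ < 1)), if_pos le_rfl,
          hlog, Real.log_div hδ2.ne' hδ0.ne', f2,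
          show (1:ℝ) + (1 - δ) = 2 - δ by ring, show (1:ℝ) - (1 - δ) = δ by ring]
        generalize Real.log (2 - δ) = A
        generalize Real.log δ = B
        field_simp
        ring
      · rw [f2deltaAux, if_neg (not_le.2 (by linarith : (1:ℝ) - δ < x)),
          if_neg (not_le.2 hlt), if_pos hx.le]
    · convert P2d 1 using 1
      rw [hlog]
      generalize Real.log ((2 - δ) / δ) = A
      field_simp
    · convert P3d 1 using 1
      generalize Real.log ((2 - δ) / δ) = A
      field_simp
      ring
  rcases lt_trichotomy c (1 + δ) with h3 | h3 | h3
  · -- 1 < c < 1 + δ : interior piece 3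
    have hev : f2deltaAux θ₀ θc δ =ᶠ[nhds c]
        (fun x : ℝ => (θc * δ * (2 - δ) - θ₀) / (6 * δ ^ 2 * (2 - δ)) * (x - 1) ^ 3
          + θ₀ / (2 * δ * (2 - δ)) * (x - 1) ^ 2
          + (θ₀ / (2 - δ) + θ₀ / 2 * Real.log ((2 - δ) / δ)) * (x - 1)
          + δ * θ₀ / (2 * (2 - δ)) + θ₀ * Real.log (2 - δ)) := by
      filter_upwards [eventually_gt_nhds h2, eventually_lt_nhds h3] with x hx1 hx2
      rw [f2deltaAux, if_neg (not_le.2 (by linarith : (1:ℝ) - δ < x)),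
        if_neg (not_le.2 hx1), if_pos hx2.le]
    have hd : gdeltaAux θ₀ θc δ c
        = (θc * δ * (2 - δ) - θ₀) / (2 * δ ^ 2 * (2 - δ)) * (c - 1) ^ 2
          + θ₀ / (δ * (2 - δ)) * (c - 1) + θ₀ / (2 - δ) + θ₀ / 2 * Real.log ((2 - δ) / δ) := by
      rw [gdeltaAux, if_neg (not_le.2 (by linarith : (1:ℝ) - δ < c)),
        if_neg (not_le.2 h2), if_pos h3.le]
    rw [hd]
    refine HasDerivAt.congr_of_eventuallyEq ?_ hev
    refine (P3d c).congr_deriv ?_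
    generalize Real.log ((2 - δ) / δ) = A
    field_simp
    ring
  · -- c = 1 + δ : junction
    subst h3
    have hd : gdeltaAux θ₀ θc δ (1 + δ)
        = (θc * δ * (2 - δ) - θ₀) / (2 * δ ^ 2 * (2 - δ)) * (1 + δ - 1) ^ 2
          + θ₀ / (δ * (2 - δ)) * (1 + δ - 1) + θ₀ / (2 - δ)
          + θ₀ / 2 * Real.log ((2 - δ) / δ) := by
      rw [gdeltaAux, if_neg (not_le.2 (by linarith : (1:ℝ) - δ < 1 + δ)),
        if_neg (not_le.2 (by linarith : (1:ℝ) < 1 + δ)), if_pos le_rfl]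
    rw [hd]
    refine glueDeriv
      (fl := fun x : ℝ => (θc * δ * (2 - δ) - θ₀) / (6 * δ ^ 2 * (2 - δ)) * (x - 1) ^ 3
        + θ₀ / (2 * δ * (2 - δ)) * (x - 1) ^ 2
        + (θ₀ / (2 - δ) + θ₀ / 2 * Real.log ((2 - δ) / δ)) * (x - 1)
        + δ * θ₀ / (2 * (2 - δ)) + θ₀ * Real.log (2 - δ))
      (fr := fun x : ℝ => θc / 2 * (x - 1 - δ) ^ 2
        + (θc * δ / 2 + 3 * θ₀ / (2 * (2 - δ)) + θ₀ / 2 * Real.log ((2 - δ) / δ))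
            * (x - 1 - δ)
        + θc * δ ^ 2 / 6 + 11 * θ₀ * δ / (6 * (2 - δ))
        + θ₀ * δ / 2 * Real.log ((2 - δ) / δ) + θ₀ * Real.log (2 - δ))
      ?_ ?_ ?_ ?_
    · filter_upwards [eventually_gt_nhds (show (1:ℝ) < 1 + δ by linarith)] with x hx hxle
      rw [f2deltaAux, if_neg (not_le.2 (by linarith : (1:ℝ) - δ < x)),
        if_neg (not_le.2 hx), if_pos hxle]
    · filter_upwards [] with x hxge
      rcases eq_or_lt_of_le hxge with he | hlt
      · rw [f2deltaAux, ← he, if_neg (not_le.2 (by linarith : (1:ℝ) - δ < 1 + δ)),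
          if_neg (not_le.2 (by linarith : (1:ℝ) < 1 + δ)), if_pos le_rfl]
        generalize Real.log ((2 - δ) / δ) = A
        generalize Real.log (2 - δ) = B
        field_simp
        ring
      · rw [f2deltaAux, if_neg (not_le.2 (by linarith : (1:ℝ) - δ < x)),
          if_neg (not_le.2 (by linarith : (1:ℝ) < x)), if_neg (not_le.2 hlt)]
    · convert P3d (1 + δ) using 1
      generalize Real.log ((2 - δ) / δ) = A
      field_simp
      ring
    · convert P4d (1 + δ) using 1
      generalize Real.log ((2 - δ) / δ) = A
      field_simp
      ring
  · -- c > 1 + δ : interior piece 4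
    have hev : f2deltaAux θ₀ θc δ =ᶠ[nhds c]
        (fun x : ℝ => θc / 2 * (x - 1 - δ) ^ 2
          + (θc * δ / 2 + 3 * θ₀ / (2 * (2 - δ)) + θ₀ / 2 * Real.log ((2 - δ) / δ))
              * (x - 1 - δ)
          + θc * δ ^ 2 / 6 + 11 * θ₀ * δ / (6 * (2 - δ))
          + θ₀ * δ / 2 * Real.log ((2 - δ) / δ) + θ₀ * Real.log (2 - δ)) := by
      filter_upwards [eventually_gt_nhds h3] with x hx
      rw [f2deltaAux, if_neg (not_le.2 (by linarith : (1:ℝ) - δ < x)),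
        if_neg (not_le.2 (by linarith : (1:ℝ) < x)), if_neg (not_le.2 hx)]
    have hd : gdeltaAux θ₀ θc δ c
        = θc * (c - 1 - δ) + θc * δ / 2 + 3 * θ₀ / (2 * (2 - δ))
          + θ₀ / 2 * Real.log ((2 - δ) / δ) := by
      rw [gdeltaAux, if_neg (not_le.2 (by linarith : (1:ℝ) - δ < c)),
        if_neg (not_le.2 (by linarith : (1:ℝ) < c)), if_neg (not_le.2 h3)]
    rw [hd]
    refine HasDerivAt.congr_of_eventuallyEq ?_ hev
    refine (P4d c).congr_deriv ?_
    ring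

private lemma gdelta_zero {θ₀ θc δ : ℝ} (hδ1 : δ < 1) : gdelta θ₀ θc δ 0 = 0 := by
  rw [gdelta, if_pos le_rfl, gdeltaAux, if_pos (by linarith : (0:ℝ) ≤ 1 - δ)]
  norm_num

private lemma gdelta_neg' {θ₀ θc δ : ℝ} (hδ1 : δ < 1) (c : ℝ) :
    gdelta θ₀ θc δ (-c) = -gdelta θ₀ θc δ c := by
  rcases lt_trichotomy c 0 with h | h | h
  · rw [gdelta, if_pos (by linarith : (0:ℝ) ≤ -c), gdelta, if_neg (not_le.2 h), neg_neg]
  · rw [h, neg_zero, gdelta_zero hδ1, neg_zero]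
  · rw [gdelta, if_neg (not_le.2 (by linarith : -c < 0)), neg_neg, gdelta, if_pos h.le]

private lemma hdelta_neg' (θ₀ θc δ c : ℝ) : hdelta θ₀ θc δ (-c) = hdelta θ₀ θc δ c := by
  rw [hdelta, hdelta, abs_neg]
  by_cases h : c = 0
  · simp [h]
  · rw [if_neg (fun hh => h (neg_eq_zero.1 hh)), if_neg h]

private lemma f2_abs (θ₀ c : ℝ) : f2 θ₀ |c| = f2 θ₀ c := by
  rcases abs_cases c with ⟨h, _⟩ | ⟨h, _⟩
  · rw [h]
  · rw [h, f2, f2, show (1:ℝ) + -c = 1 - c by ring, show (1:ℝ) - -c = 1 + c by ring]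
    ring

/-- the odd extension `g̃^δ` is differentiable at every point of `ℝ`
and its derivative equals the even function `h^δ`; in particular `h^δ` is the
second derivative of the regularized potential `f₂^δ`. -/
theorem gdelta_hasDeriv (θ₀ θc δ : ℝ) (hθ₀ : 0 < θ₀) (hθ : θ₀ < θc)
    (hδ : δ ∈ Set.Ioo (0:ℝ) 1) :
    (∀ c : ℝ, DifferentiableAt ℝ (gdelta θ₀ θc δ) c) ∧
      (∀ c : ℝ, deriv (gdelta θ₀ θc δ) c = hdelta θ₀ θc δ c) ∧
      (∀ c : ℝ, deriv (deriv (f2delta θ₀ θc δ)) c = hdelta θ₀ θc δ c) := by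
  obtain ⟨hδ0, hδ1⟩ := hδ
  have hApos : ∀ c : ℝ, 0 ≤ c → HasDerivAt (gdelta θ₀ θc δ) (hdelta θ₀ θc δ c) c := by
    intro c hc
    rcases eq_or_lt_of_le hc with h0 | h0
    · -- c = 0
      rw [← h0]
      have hev : gdelta θ₀ θc δ =ᶠ[nhds (0:ℝ)]
          (fun x : ℝ => θ₀ / 2 * (Real.log (1 + x) - Real.log (1 - x))) := by
        filter_upwards [isOpen_Ioo.mem_nhds
          (show (0:ℝ) ∈ Ioo (-(1 - δ)) (1 - δ) by constructor <;> [linarith; linarith])]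
          with x hx
        rcases le_or_gt 0 x with hx0 | hx0
        · rw [gdelta, if_pos hx0, gdeltaAux, if_pos hx.2.le,
            Real.log_div (by linarith [hx.1] : (1:ℝ) + x ≠ 0)
              (by nlinarith [hx.2] : (1:ℝ) - x ≠ 0)]
        · rw [gdelta, if_neg (not_le.2 hx0), gdeltaAux,
            if_pos (by linarith [hx.1] : -x ≤ 1 - δ),
            Real.log_div (by nlinarith [hx.2] : (1:ℝ) + -x ≠ 0)
              (by linarith [hx.1] : (1:ℝ) - -x ≠ 0),
            show (1:ℝ) + -x = 1 - x by ring, show (1:ℝ) - -x = 1 + x by ring]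
          ring
      have h := (hasDerivAt_logdiff θ₀ 0 (by norm_num) (by norm_num)).congr_of_eventuallyEq hev
      rw [hdelta, if_pos rfl]
      refine h.congr_deriv ?_
      norm_num
    · -- c > 0
      have hev : gdelta θ₀ θc δ =ᶠ[nhds c] gdeltaAux θ₀ θc δ := by
        filter_upwards [eventually_gt_nhds h0] with x hx
        rw [gdelta, if_pos hx.le]
      have h := (A_aux hθ₀ hδ0 hδ1 (by linarith : (-1:ℝ) < c)).congr_of_eventuallyEq hev
      rw [hdelta, if_neg h0.ne', abs_of_pos h0]
      exact h
  have hA : ∀ c : ℝ, HasDerivAt (gdelta θ₀ θc δ) (hdelta θ₀ θc δ c) c := by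
    intro c
    rcases le_or_gt 0 c with hc | hc
    · exact hApos c hc
    · have h := (hApos (-c) (by linarith)).comp c (hasDerivAt_neg c)
      have h2 := h.neg
      have h3 : HasDerivAt (gdelta θ₀ θc δ) (-(hdelta θ₀ θc δ (-c) * -1)) c := by
        refine h2.congr_of_eventuallyEq (Filter.Eventually.of_forall fun x => ?_)
        show gdelta θ₀ θc δ x = -gdelta θ₀ θc δ (-x)
        rw [gdelta_neg' hδ1 x]
        ring
      rw [← hdelta_neg' θ₀ θc δ c]
      convert h3 using 1
      ring
  have hBpos : ∀ c : ℝ, 0 ≤ c → HasDerivAt (f2delta θ₀ θc δ) (gdelta θ₀ θc δ c) c := by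
    intro c hc
    rcases eq_or_lt_of_le hc with h0 | h0
    · rw [← h0]
      have hev : f2delta θ₀ θc δ =ᶠ[nhds (0:ℝ)] f2 θ₀ := by
        filter_upwards [isOpen_Ioo.mem_nhds
          (show (0:ℝ) ∈ Ioo (-(1 - δ)) (1 - δ) by constructor <;> [linarith; linarith])]
          with x hx
        have habs : |x| ≤ 1 - δ := by
          rw [abs_le]; exact ⟨hx.1.le, hx.2.le⟩
        rw [f2delta, f2deltaAux, if_pos habs, f2_abs]
      have h := (hasDerivAt_f2 θ₀ 0 (by norm_num) (by norm_num)).congr_of_eventuallyEq hev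
      rw [gdelta, if_pos le_rfl, gdeltaAux, if_pos (by linarith : (0:ℝ) ≤ 1 - δ)]
      refine h.congr_deriv ?_
      norm_num
    · have hev : f2delta θ₀ θc δ =ᶠ[nhds c] f2deltaAux θ₀ θc δ := by
        filter_upwards [eventually_gt_nhds h0] with x hx
        rw [f2delta, abs_of_pos hx]
      have h := (B_aux hθ₀ hδ0 hδ1 (by linarith : (-1:ℝ) < c)).congr_of_eventuallyEq hev
      rw [gdelta, if_pos hc]
      exact h
  have hB : ∀ c : ℝ, HasDerivAt (f2delta θ₀ θc δ) (gdelta θ₀ θc δ c) c := by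
    intro c
    rcases le_or_gt 0 c with hc | hc
    · exact hBpos c hc
    · have h := (hBpos (-c) (by linarith)).comp c (hasDerivAt_neg c)
      have h3 : HasDerivAt (f2delta θ₀ θc δ) (gdelta θ₀ θc δ (-c) * -1) c := by
        refine h.congr_of_eventuallyEq (Filter.Eventually.of_forall fun x => ?_)
        simp only [Function.comp_apply]
        rw [f2delta, f2delta, abs_neg]
      rw [show gdelta θ₀ θc δ c = gdelta θ₀ θc δ (-c) * -1 by
        rw [gdelta_neg' hδ1 c]; ring]
      exact h3
  refine ⟨fun c => (hA c).differentiableAt, fun c => (hA c).deriv, fun c => ?_⟩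
  have hd : deriv (f2delta θ₀ θc δ) = gdelta θ₀ θc δ := funext fun x => (hB x).deriv
  rw [hd]
  exact (hA c).deriv
end

section
/- There exists a constant M > 0 depending only on θ₀ and θ_c (in particular independent of δ) such that for every δ ∈ (0,1) and every real c with |c| ≤ c*, one has |g̃^δ(c) − θ_c·c| ≤ M. -/
open Real Set

set_option maxHeartbeats 1000000 in
/-- there is `M > 0` depending only on `θ₀, θc` such that for every
`δ ∈ (0,1)` and every `c` with `|c| ≤ c* = 1 − 2/(1 + exp(2θc/θ₀))`, one has
`|g̃^δ(c) − θc·c| ≤ M`. -/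
theorem gdelta_bounded_below_cstar (θ₀ θc : ℝ) (hθ₀ : 0 < θ₀) (hθ : θ₀ < θc) :
    ∃ M : ℝ, 0 < M ∧ ∀ δ ∈ Set.Ioo (0:ℝ) 1, ∀ c : ℝ,
      |c| ≤ 1 - 2 / (1 + Real.exp (2 * θc / θ₀)) →
      |gdelta θ₀ θc δ c - θc * c| ≤ M := by
  have hθc : 0 < θc := lt_trans hθ₀ hθ
  set E : ℝ := Real.exp (2 * θc / θ₀) with hEdef
  have hE1 : 1 < E := by
    rw [hEdef]
    have : (0:ℝ) < 2 * θc / θ₀ := by positivity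
    calc (1:ℝ) = Real.exp 0 := (Real.exp_zero).symm
    _ < E := Real.exp_lt_exp.mpr this
  have hE0 : 0 < 1 + E := by linarith
  have hlogE : Real.log E = 2 * θc / θ₀ := Real.log_exp _
  have hlog1E : 0 ≤ Real.log (1 + E) := Real.log_nonneg (by linarith)
  set cs : ℝ := 1 - 2 / (1 + E) with hcsdef
  have hcs1 : cs < 1 := by
    have : 0 < 2 / (1 + E) := by positivity
    simp only [hcsdef]; linarith
  set K : ℝ := θc + θ₀ + θ₀ / 2 * Real.log (1 + E) with hKdef
  have hKpos : 0 < K := by positivity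
  have key : ∀ δ ∈ Set.Ioo (0:ℝ) 1, ∀ c : ℝ, 0 ≤ c → c ≤ cs →
      |gdeltaAux θ₀ θc δ c| ≤ K := by
    rintro δ ⟨hδ0, hδ1⟩ c hc0 hccs
    have hc1 : c < 1 := lt_of_le_of_lt hccs hcs1
    unfold gdeltaAux
    by_cases h1 : c ≤ 1 - δ
    · simp only [h1, if_true]
      have h1c : 0 < 1 - c := by linarith
      have hratio1 : 1 ≤ (1 + c) / (1 - c) := by
        rw [le_div_iff₀ h1c]; linarith
      have hratioE : (1 + c) / (1 - c) ≤ E := by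
        rw [div_le_iff₀ h1c]
        have hcb : c * (1 + E) ≤ E - 1 := by
          have : c ≤ 1 - 2 / (1 + E) := hccs
          have h2 : c * (1 + E) ≤ (1 - 2 / (1 + E)) * (1 + E) := by
            have := hE0; nlinarith
          have h3 : (1 - 2 / (1 + E)) * (1 + E) = E - 1 := by
            field_simp; ring
          linarith [h2, h3.le]
        nlinarith
      have hlog0 : 0 ≤ Real.log ((1 + c) / (1 - c)) := Real.log_nonneg hratio1
      have hlogub : Real.log ((1 + c) / (1 - c)) ≤ 2 * θc / θ₀ := by
        rw [← hlogE]
        exact Real.log_le_log (by positivity) hratioE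
      rw [abs_of_nonneg (by positivity)]
      have : θ₀ / 2 * Real.log ((1 + c) / (1 - c)) ≤ θ₀ / 2 * (2 * θc / θ₀) := by
        apply mul_le_mul_of_nonneg_left hlogub (by positivity)
      have heq : θ₀ / 2 * (2 * θc / θ₀) = θc := by field_simp
      rw [hKdef]; nlinarith
    · have h2 : c ≤ 1 := hc1.le
      simp only [h1, if_false, h2, if_true]
      push_neg at h1
      have hδlb : 1 - c < δ := by linarith
      have hcsδ : 2 / (1 + E) < δ := by
        have : 2 / (1 + E) ≤ 1 - c := by simp only [hcsdef] at hccs; linarith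
        linarith
      have hδden : 0 < δ * (2 - δ) := by nlinarith
      have ht0 : 0 < c - 1 + δ := by linarith
      have htδ : c - 1 + δ ≤ δ := by linarith
      have hterm1 : θ₀ / (δ * (2 - δ)) * (c - 1 + δ) ≤ θ₀ := by
        rw [div_mul_eq_mul_div, div_le_iff₀ hδden]
        nlinarith [mul_le_mul_of_nonneg_left htδ hθ₀.le,
          mul_nonneg (mul_nonneg hθ₀.le hδ0.le) (by linarith : (0:ℝ) ≤ 1 - δ)]
      have hterm1' : 0 ≤ θ₀ / (δ * (2 - δ)) * (c - 1 + δ) := by positivity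
      have hr1 : 1 ≤ (2 - δ) / δ := by
        rw [le_div_iff₀ hδ0]; linarith
      have hrE : (2 - δ) / δ ≤ 1 + E := by
        rw [div_le_iff₀ hδ0]
        have h4 : 2 < (1 + E) * δ := by
          have := (div_lt_iff₀ hE0).mp hcsδ
          linarith
        nlinarith
      have hlog0 : 0 ≤ Real.log ((2 - δ) / δ) := Real.log_nonneg hr1
      have hlogub : Real.log ((2 - δ) / δ) ≤ Real.log (1 + E) :=
        Real.log_le_log (by positivity) hrE
      rw [abs_of_nonneg (by positivity)]
      have hterm2 : θ₀ / 2 * Real.log ((2 - δ) / δ) ≤ θ₀ / 2 * Real.log (1 + E) :=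
        mul_le_mul_of_nonneg_left hlogub (by positivity)
      rw [hKdef]; linarith
  refine ⟨K + θc, by positivity, ?_⟩
  rintro δ hδ c hc
  have hcs0 : |c| ≤ cs := hc
  have hc1 : |c| ≤ 1 := le_trans hcs0 hcs1.le
  have hθcc : |θc * c| ≤ θc := by
    rw [abs_mul, abs_of_pos hθc]
    nlinarith [abs_nonneg c]
  unfold gdelta
  by_cases h : 0 ≤ c
  · simp only [h, if_true]
    have := key δ hδ c h (by rwa [abs_of_nonneg h] at hcs0)
    calc |gdeltaAux θ₀ θc δ c - θc * c| ≤ |gdeltaAux θ₀ θc δ c| + |θc * c| :=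
          abs_sub _ _
      _ ≤ K + θc := add_le_add this hθcc
  · simp only [h, if_false]
    push_neg at h
    have hnc : (0:ℝ) ≤ -c := by linarith
    have := key δ hδ (-c) hnc (by rwa [abs_of_neg h] at hcs0)
    have h5 : |(-gdeltaAux θ₀ θc δ (-c)) - θc * c| ≤ |(-gdeltaAux θ₀ θc δ (-c))| + |θc * c| :=
      abs_sub (-gdeltaAux θ₀ θc δ (-c)) (θc * c)
    rw [abs_neg] at h5
    linarith
end

section
/- There exists δ₀ ∈ (0,1), depending only on θ₀ and θ_c, such that for every δ ∈ (0,δ₀) and every real c with |c| > c*, one has (g̃^δ(c) − θ_c·c)·c > 0. -/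
open Real Set

set_option maxHeartbeats 1000000 in
lemma gdeltaAux_key (θ₀ θc : ℝ) (hθ₀ : 0 < θ₀) (hθ : θ₀ < θc) (δ : ℝ)
    (hδ0 : 0 < δ) (hδ : δ < Real.exp (-(4 * θc / θ₀))) (c : ℝ)
    (hc : 1 - 2 / (1 + Real.exp (2 * θc / θ₀)) < c) :
    θc * c < gdeltaAux θ₀ θc δ c := by
  have hθc : 0 < θc := hθ₀.trans hθ
  have htpos : 0 < 2 * θc / θ₀ := by positivity
  have h42 : 4 * θc / θ₀ = 2 * (2 * θc / θ₀) := by ring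
  have hE1 : 1 < Real.exp (2 * θc / θ₀) := by
    have := Real.add_one_le_exp (2 * θc / θ₀); linarith
  set E := Real.exp (2 * θc / θ₀) with hEdef
  have hexp4' : 4 * θc / θ₀ + 1 ≤ Real.exp (4 * θc / θ₀) := Real.add_one_le_exp _
  have hexp4 : 2 * θc / θ₀ < Real.exp (4 * θc / θ₀) := by linarith
  have hexp4pos : 0 < Real.exp (4 * θc / θ₀) := Real.exp_pos _
  have hexp4gt1 : 1 < Real.exp (4 * θc / θ₀) := by linarith
  have hδsmall : δ * Real.exp (4 * θc / θ₀) < 1 := by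
    have h := Real.exp_neg (4 * θc / θ₀)
    rw [h] at hδ
    calc δ * Real.exp (4 * θc / θ₀)
        < (Real.exp (4 * θc / θ₀))⁻¹ * Real.exp (4 * θc / θ₀) :=
          mul_lt_mul_of_pos_right hδ hexp4pos
      _ = 1 := inv_mul_cancel₀ (ne_of_gt hexp4pos)
  have hδ1 : δ < 1 := by nlinarith
  have h2δ : 0 < 2 - δ := by linarith
  have hδθ : 2 * θc * δ < θ₀ := by
    have h1 : δ * (2 * θc / θ₀) < δ * Real.exp (4 * θc / θ₀) :=
      mul_lt_mul_of_pos_left hexp4 hδ0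
    have h2 : δ * (2 * θc / θ₀) < 1 := lt_trans h1 hδsmall
    have h3 : δ * (2 * θc / θ₀) * θ₀ < 1 * θ₀ := mul_lt_mul_of_pos_right h2 hθ₀
    have h4 : δ * (2 * θc / θ₀) * θ₀ = 2 * θc * δ := by field_simp
    linarith [h4 ▸ h3]
  have hA : θc * δ * (2 - δ) - θ₀ < 0 := by nlinarith
  have hLbig : 4 * θc / θ₀ < Real.log ((2 - δ) / δ) := by
    have hq : Real.exp (4 * θc / θ₀) < (2 - δ) / δ := by
      rw [lt_div_iff₀ hδ0]
      nlinarith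
    calc 4 * θc / θ₀ = Real.log (Real.exp (4 * θc / θ₀)) := (Real.log_exp _).symm
      _ < Real.log ((2 - δ) / δ) := Real.log_lt_log hexp4pos hq
  have hL2 : 2 * θc < θ₀ / 2 * Real.log ((2 - δ) / δ) := by
    have h5 := mul_lt_mul_of_pos_left hLbig (half_pos hθ₀)
    have heq : θ₀ / 2 * (4 * θc / θ₀) = 2 * θc := by field_simp; ring
    linarith [heq ▸ h5]
  have hc0 : 0 < c := by
    have h1E : (0:ℝ) < 1 + E := by linarith
    have : 2 / (1 + E) < 1 := by rw [div_lt_one h1E]; linarith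
    linarith
  rw [gdeltaAux]
  rcases le_or_gt c (1 - δ) with h1 | h1
  · rw [if_pos h1]
    have hc1 : c < 1 := by linarith
    have hden : 0 < 1 - c := by linarith
    have h1E : (0:ℝ) < 1 + E := by linarith
    have hE' : E * (1 - c) < 1 + c := by
      have h2 : 1 - c < 2 / (1 + E) := by linarith
      rw [lt_div_iff₀ h1E] at h2
      nlinarith
    have hfrac : E < (1 + c) / (1 - c) := (lt_div_iff₀ hden).mpr hE'
    have hlog : 2 * θc / θ₀ < Real.log ((1 + c) / (1 - c)) := by
      calc 2 * θc / θ₀ = Real.log E := (Real.log_exp _).symm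
        _ < _ := Real.log_lt_log (Real.exp_pos _) hfrac
    have h5 : θ₀ / 2 * (2 * θc / θ₀) < θ₀ / 2 * Real.log ((1 + c) / (1 - c)) :=
      mul_lt_mul_of_pos_left hlog (half_pos hθ₀)
    have h6 : θ₀ / 2 * (2 * θc / θ₀) = θc := by field_simp
    have h7 : θc * c < θc * 1 := mul_lt_mul_of_pos_left hc1 hθc
    linarith [h6 ▸ h5]
  · rw [if_neg (not_le.mpr h1)]
    rcases le_or_gt c 1 with h2 | h2
    · rw [if_pos h2]
      have hterm : 0 < θ₀ / (δ * (2 - δ)) * (c - 1 + δ) := by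
        apply mul_pos (by positivity); linarith
      have h7 : θc * c ≤ θc * 1 := mul_le_mul_of_nonneg_left h2 hθc.le
      linarith
    · rw [if_neg (not_le.mpr h2)]
      rcases le_or_gt c (1 + δ) with h3 | h3
      · rw [if_pos h3]
        have hs0 : 0 < c - 1 := by linarith
        have hsδ : c - 1 ≤ δ := by linarith
        have hcoef : (θc * δ * (2 - δ) - θ₀) / (2 * δ ^ 2 * (2 - δ)) < 0 :=
          div_neg_of_neg_of_pos hA (by positivity)
        have hsq : (c - 1) ^ 2 ≤ δ ^ 2 := by nlinarith
        have hmono : (θc * δ * (2 - δ) - θ₀) / (2 * δ ^ 2 * (2 - δ)) * δ ^ 2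
            ≤ (θc * δ * (2 - δ) - θ₀) / (2 * δ ^ 2 * (2 - δ)) * (c - 1) ^ 2 :=
          mul_le_mul_of_nonpos_left hsq (le_of_lt hcoef)
        have heq : (θc * δ * (2 - δ) - θ₀) / (2 * δ ^ 2 * (2 - δ)) * δ ^ 2
            = θc * δ / 2 - θ₀ / (2 * (2 - δ)) := by
          field_simp
        rw [heq] at hmono
        have hterm2 : 0 < θ₀ / (δ * (2 - δ)) * (c - 1) :=
          mul_pos (by positivity) hs0
        have hterm3 : θ₀ / (2 * (2 - δ)) < θ₀ / (2 - δ) := by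
          apply div_lt_div_of_pos_left hθ₀ h2δ; linarith
        have hcs : θc * (c - 1) ≤ θc * δ := mul_le_mul_of_nonneg_left hsδ hθc.le
        have hcδ : θc * δ < θc := by nlinarith
        have hcc : θc * c = θc * (c - 1) + θc := by ring
        linarith
      · rw [if_neg (not_le.mpr h3)]
        have hpos : 0 < 3 * θ₀ / (2 * (2 - δ)) := by positivity
        have hcδ : θc * δ < θc := by nlinarith
        have hexp : θc * (c - 1 - δ) = θc * c - θc - θc * δ := by ring
        linarith

/-- there exists `δ₀ ∈ (0,1)`, depending only on `θ₀, θc`, such that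
for every `δ ∈ (0,δ₀)` and every `c` with `|c| > c*`, one has
`(g̃^δ(c) − θc·c)·c > 0`. -/
theorem gdelta_sign_above_cstar (θ₀ θc : ℝ) (hθ₀ : 0 < θ₀) (hθ : θ₀ < θc) :
    ∃ δ₀ ∈ Set.Ioo (0:ℝ) 1, ∀ δ ∈ Set.Ioo (0:ℝ) δ₀, ∀ c : ℝ,
      1 - 2 / (1 + Real.exp (2 * θc / θ₀)) < |c| →
      0 < (gdelta θ₀ θc δ c - θc * c) * c := by
  refine ⟨Real.exp (-(4 * θc / θ₀)), ⟨Real.exp_pos _, Real.exp_lt_one_iff.mpr (by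
    have hθc : 0 < θc := hθ₀.trans hθ
    have : 0 < 4 * θc / θ₀ := by positivity
    linarith)⟩, ?_⟩
  intro δ hδmem c hc
  obtain ⟨hδ0, hδ⟩ := hδmem
  rcases le_or_gt 0 c with hc0 | hc0
  · rw [abs_of_nonneg hc0] at hc
    have hkey := gdeltaAux_key θ₀ θc hθ₀ hθ δ hδ0 hδ c hc
    have hcpos : 0 < c := by
      have hθc : 0 < θc := hθ₀.trans hθ
      have hE1 : 1 < Real.exp (2 * θc / θ₀) := by
        have := Real.add_one_le_exp (2 * θc / θ₀)
        have : 0 < 2 * θc / θ₀ := by positivity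
        linarith [Real.add_one_le_exp (2 * θc / θ₀)]
      have h1E : (0:ℝ) < 1 + Real.exp (2 * θc / θ₀) := by linarith
      have : 2 / (1 + Real.exp (2 * θc / θ₀)) < 1 := by rw [div_lt_one h1E]; linarith
      linarith
    have hg : gdelta θ₀ θc δ c = gdeltaAux θ₀ θc δ c := if_pos hc0
    rw [hg]
    exact mul_pos (by linarith) hcpos
  · rw [abs_of_neg hc0] at hc
    have hkey := gdeltaAux_key θ₀ θc hθ₀ hθ δ hδ0 hδ (-c) hc
    have hg : gdelta θ₀ θc δ c = -gdeltaAux θ₀ θc δ (-c) := if_neg (not_le.mpr hc0)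
    have hprod : 0 < (gdeltaAux θ₀ θc δ (-c) - θc * (-c)) * (-c) :=
      mul_pos (by linarith) (by linarith)
    have heq : (gdelta θ₀ θc δ c - θc * c) * c
        = (gdeltaAux θ₀ θc δ (-c) - θc * (-c)) * (-c) := by rw [hg]; ring
    rw [heq]
    exact hprod
end

section
/- For every δ with 0 < δ ≤ 1 − √(1 − θ₀/θ_c) and every real c with √(1 − θ₀/θ_c) ≤ |c| ≤ 1+δ, one has h^δ(c) − θ_c ≥ 0. -/
open Real Set

/-- for every `δ` with `0 < δ ≤ 1 − √(1 − θ₀/θc)` and every `c`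
with `√(1 − θ₀/θc) ≤ |c| ≤ 1+δ`, one has `h^δ(c) − θc ≥ 0`. -/
theorem hdelta_nonneg (θ₀ θc δ : ℝ) (hθ₀ : 0 < θ₀) (hθ : θ₀ < θc)
    (hδ0 : 0 < δ) (hδ : δ ≤ 1 - Real.sqrt (1 - θ₀ / θc)) :
    ∀ c : ℝ, Real.sqrt (1 - θ₀ / θc) ≤ |c| → |c| ≤ 1 + δ →
      0 ≤ hdelta θ₀ θc δ c - θc := by
  intro c hs hc
  have hθc : 0 < θc := hθ₀.trans hθ
  have harg : 0 < 1 - θ₀ / θc := by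
    have : θ₀ / θc < 1 := (div_lt_one hθc).mpr hθ
    linarith
  set s := Real.sqrt (1 - θ₀ / θc) with hsdef
  have hs0 : 0 < s := Real.sqrt_pos.mpr harg
  have hs2 : s ^ 2 = 1 - θ₀ / θc := Real.sq_sqrt harg.le
  have hsδ : δ ≤ 1 - s := hδ
  have hδlt : δ < 1 := by linarith
  have hc0 : c ≠ 0 := by
    intro h; rw [h, abs_zero] at hs; linarith
  have hkey : δ * (2 - δ) ≤ θ₀ / θc := by nlinarith
  have hD : 0 < δ * (2 - δ) := by nlinarith
  have hBge : θc ≤ θ₀ / (δ * (2 - δ)) := by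
    rw [le_div_iff₀ hD]
    have : θc * (δ * (2 - δ)) ≤ θc * (θ₀ / θc) := by nlinarith
    calc θc * (δ * (2 - δ)) ≤ θc * (θ₀ / θc) := this
      _ = θ₀ := by field_simp
  rw [hdelta, if_neg hc0, hdeltaAux]
  by_cases h1 : |c| ≤ 1 - δ
  · rw [if_pos h1]
    have hlt : |c| < 1 := by linarith
    have habs : 0 ≤ |c| := abs_nonneg c
    have hpos : 0 < 1 - |c| ^ 2 := by nlinarith
    have hle : 1 - |c| ^ 2 ≤ θ₀ / θc := by nlinarith
    have : θc ≤ θ₀ / (1 - |c| ^ 2) := by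
      rw [le_div_iff₀ hpos]
      calc θc * (1 - |c| ^ 2) ≤ θc * (θ₀ / θc) := by nlinarith
        _ = θ₀ := by field_simp
    linarith
  · push_neg at h1
    rw [if_neg (by linarith)]
    by_cases h2 : |c| ≤ 1
    · rw [if_pos h2]
      linarith
    · push_neg at h2
      rw [if_neg (by linarith), if_pos hc]
      set A := (θc * δ * (2 - δ) - θ₀) / (δ ^ 2 * (2 - δ)) with hA
      have hD2 : 0 < δ ^ 2 * (2 - δ) := by nlinarith
      have hNum : θc * δ * (2 - δ) - θ₀ ≤ 0 := by
        have : θc * (δ * (2 - δ)) ≤ θc * (θ₀ / θc) := by nlinarith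
        have h' : θc * (θ₀ / θc) = θ₀ := by field_simp
        nlinarith
      have hA0 : A ≤ 0 := div_nonpos_of_nonpos_of_nonneg hNum hD2.le
      have hB : θ₀ / (δ * (2 - δ)) = θc - A * δ := by
        have h2d : (2 - δ) ≠ 0 := (by linarith)
        rw [hA]; field_simp; ring
      rw [hB]
      nlinarith [mul_nonneg (neg_nonneg.mpr hA0) (by linarith : (0:ℝ) ≤ 1 + δ - |c|)]
end

section
/- For every δ ∈ (0,1) and every real c > 1+δ, g^δ(c) − θ_c·c = (θ₀/2)·log((2−δ)/δ) + 3θ₀/(2(2−δ)) − θ_c·(1 + δ/2); in particular this value is independent of c. Moreover, there exist δ₀ ∈ (0,1) and C > 0, depending only on θ₀ and θ_c, such that for every δ ∈ (0,δ₀) this value is positive and at most C·log(1/δ). -/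
open Real Set

/-- for every `δ ∈ (0,1)` and every `c > 1+δ`,
`g^δ(c) − θc·c = (θ₀/2)·log((2−δ)/δ) + 3θ₀/(2(2−δ)) − θc(1 + δ/2)` (a value
independent of `c`); moreover there are `δ₀ ∈ (0,1)` and `C > 0`, depending only
on `θ₀, θc`, such that for `δ ∈ (0,δ₀)` this value is positive and at most
`C·log(1/δ)`. -/
theorem gdelta_tail_value (θ₀ θc : ℝ) (hθ₀ : 0 < θ₀) (hθ : θ₀ < θc) :
    (∀ δ ∈ Set.Ioo (0:ℝ) 1, ∀ c : ℝ, 1 + δ < c →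
      gdeltaAux θ₀ θc δ c - θc * c
        = θ₀ / 2 * Real.log ((2 - δ) / δ) + 3 * θ₀ / (2 * (2 - δ))
            - θc * (1 + δ / 2)) ∧
    ∃ δ₀ ∈ Set.Ioo (0:ℝ) 1, ∃ C : ℝ, 0 < C ∧ ∀ δ ∈ Set.Ioo (0:ℝ) δ₀,
      0 < θ₀ / 2 * Real.log ((2 - δ) / δ) + 3 * θ₀ / (2 * (2 - δ))
            - θc * (1 + δ / 2) ∧
      θ₀ / 2 * Real.log ((2 - δ) / δ) + 3 * θ₀ / (2 * (2 - δ)) - θc * (1 + δ / 2)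
        ≤ C * Real.log (1 / δ) := by
  constructor
  · intro δ hδ c hc
    obtain ⟨hδ0, hδ1⟩ := hδ
    have h1 : ¬ c ≤ 1 - δ := by linarith
    have h2 : ¬ c ≤ 1 := by linarith
    have h3 : ¬ c ≤ 1 + δ := by linarith
    simp only [gdeltaAux, h1, h2, h3, if_false]
    ring
  · have hθc : 0 < θc := lt_trans hθ₀ hθ
    have hl2 : 0 < Real.log 2 := Real.log_pos (by norm_num)
    have hexp01 : Real.exp (-(3 * θc / θ₀)) < 1 :=
      Real.exp_lt_one_iff.mpr (neg_lt_zero.mpr (by positivity))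
    refine ⟨Real.exp (-(3 * θc / θ₀)), ⟨Real.exp_pos _, hexp01⟩,
      θ₀ * (2 + Real.log 2 / 2), by nlinarith, ?_⟩
    intro δ ⟨hδ0, hδ1⟩
    have hδlt1 : δ < 1 := lt_trans hδ1 hexp01
    have h2δ : (1:ℝ) ≤ 2 - δ := by linarith
    have hL : 3 * θc / θ₀ < Real.log (1 / δ) := by
      have : Real.log δ < -(3 * θc / θ₀) := by
        calc Real.log δ < Real.log (Real.exp (-(3 * θc / θ₀))) :=
              Real.log_lt_log hδ0 hδ1
          _ = -(3 * θc / θ₀) := Real.log_exp _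
      rw [Real.log_div one_ne_zero (ne_of_gt hδ0), Real.log_one]
      linarith
    have hlow : Real.log (1 / δ) ≤ Real.log ((2 - δ) / δ) := by
      apply Real.log_le_log (by positivity)
      gcongr
      all_goals linarith
    have hhigh : Real.log ((2 - δ) / δ) ≤ Real.log 2 + Real.log (1 / δ) := by
      rw [← Real.log_mul two_ne_zero (by positivity)]
      apply Real.log_le_log (by positivity)
      rw [mul_one_div]
      gcongr
      all_goals linarith
    have hLθ : 3 * θc / θ₀ > 3 := by
      rw [gt_iff_lt, lt_div_iff₀ hθ₀]; nlinarith
    have hL1 : (1:ℝ) ≤ Real.log (1 / δ) := by linarith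
    have hmid : 0 < 3 * θ₀ / (2 * (2 - δ)) := by positivity
    have hmid2 : 3 * θ₀ / (2 * (2 - δ)) ≤ 3 * θ₀ / 2 := by
      apply div_le_div_of_nonneg_left (by positivity) (by positivity)
      linarith
    constructor
    · have : 3 * θc / 2 < θ₀ / 2 * Real.log (1 / δ) := by
        rw [div_lt_iff₀ hθ₀] at hL
        nlinarith
      nlinarith [hlow]
    · have h1 : θ₀ / 2 * Real.log ((2 - δ) / δ)
          ≤ θ₀ / 2 * Real.log 2 + θ₀ / 2 * Real.log (1 / δ) := by
        nlinarith [hhigh]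
      nlinarith [mul_nonneg hθ₀.le (sub_nonneg.mpr hL1),
        mul_nonneg (mul_nonneg hθ₀.le hl2.le) (sub_nonneg.mpr hL1),
        mul_pos hθc (by linarith : (0:ℝ) < 1 + δ / 2)]
end

section
/- There exist δ₀ ∈ (0,1) and C > 0, depending only on θ₀ and θ_c, such that for every δ ∈ (0,δ₀) and every real c with |c| > 1, one has (g̃^δ(c) − θ_c·c)² ≥ C·log(2/δ − 1). -/
open Real Set

lemma key (θ₀ θc δ c : ℝ) (hθ₀ : 0 < θ₀) (hθ : θ₀ < θc)
    (hδ : 0 < δ) (hδ1 : δ < 1) (hδ2 : 2 * δ * θc < θ₀)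
    (hL : 6 * θc / θ₀ ≤ Real.log (2 / δ - 1))
    (hc : 1 < c) :
    θ₀ / 4 * Real.log (2 / δ - 1) ≤ gdeltaAux θ₀ θc δ c - θc * c := by
  have hθc : 0 < θc := hθ₀.trans hθ
  have h2δ : 0 < 2 - δ := by linarith
  have hlog : Real.log ((2 - δ) / δ) = Real.log (2 / δ - 1) := by
    congr 1
    field_simp
  set L := Real.log (2 / δ - 1) with hLdef
  have hLθ : 3 * θc / 2 ≤ θ₀ / 4 * L := by
    have := mul_le_mul_of_nonneg_left hL (by linarith : (0:ℝ) ≤ θ₀ / 4)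
    calc 3 * θc / 2 = θ₀ / 4 * (6 * θc / θ₀) := by field_simp; ring
      _ ≤ θ₀ / 4 * L := this
  have h1 : ¬ c ≤ 1 - δ := by linarith
  have h2 : ¬ c ≤ 1 := by linarith
  unfold gdeltaAux
  rw [if_neg h1, if_neg h2, hlog]
  by_cases h3 : c ≤ 1 + δ
  · rw [if_pos h3]
    set t := c - 1 with ht
    have ht0 : 0 < t := by simp [ht]; linarith
    have htδ : t ≤ δ := by simp [ht]; linarith
    have hq : 0 ≤ (θc * δ * (2 - δ) - θ₀) / (2 * δ ^ 2 * (2 - δ)) * t ^ 2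
        + θ₀ / (δ * (2 - δ)) * t - θc * t := by
      have hD : 0 < 2 * δ ^ 2 * (2 - δ) := by positivity
      have key2 : 0 ≤ ((θc * δ * (2 - δ) - θ₀) * t ^ 2
          + 2 * δ * θ₀ * t - 2 * δ ^ 2 * (2 - δ) * θc * t) := by
        have hu : (0:ℝ) ≤ θ₀ - δ * (2 - δ) * θc := by nlinarith [mul_pos hδ (mul_pos hδ hθc)]
        have hint1 : 0 ≤ (δ - t) * t * (θ₀ - δ * (2 - δ) * θc) :=
          mul_nonneg (mul_nonneg (by linarith) ht0.le) hu
        have hint2 : 0 ≤ t * δ * (θ₀ - δ * (2 - δ) * θc) :=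
          mul_nonneg (mul_nonneg ht0.le hδ.le) hu
        nlinarith [hint1, hint2]
      have : (θc * δ * (2 - δ) - θ₀) / (2 * δ ^ 2 * (2 - δ)) * t ^ 2
          + θ₀ / (δ * (2 - δ)) * t - θc * t
          = ((θc * δ * (2 - δ) - θ₀) * t ^ 2
          + 2 * δ * θ₀ * t - 2 * δ ^ 2 * (2 - δ) * θc * t) / (2 * δ ^ 2 * (2 - δ)) := by
        field_simp
      rw [this]
      positivity
    have hpos : 0 < θ₀ / (2 - δ) := by positivity
    have hθcc : θc * c = θc * t + θc := by ring
    linarith [hq, hpos, hLθ]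
  · rw [if_neg h3]
    have hpos : 0 < 3 * θ₀ / (2 * (2 - δ)) := by positivity
    have hr : θc * (c - 1 - δ) - θc * c = -θc - θc * δ := by ring
    have h4 : 0 ≤ θc * (1 - δ) := mul_nonneg hθc.le (by linarith)
    have h5 : θc * (1 - δ) = θc - θc * δ := by ring
    linarith [hLθ, hpos, hr]

/-- there are `δ₀ ∈ (0,1)` and `C > 0`, depending only on `θ₀, θc`,
such that for every `δ ∈ (0,δ₀)` and every `c` with `|c| > 1`,
`(g̃^δ(c) − θc·c)² ≥ C·log(2/δ − 1)`. -/
theorem gdelta_singular_lower_bound (θ₀ θc : ℝ) (hθ₀ : 0 < θ₀) (hθ : θ₀ < θc) :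
    ∃ δ₀ ∈ Set.Ioo (0:ℝ) 1, ∃ C : ℝ, 0 < C ∧ ∀ δ ∈ Set.Ioo (0:ℝ) δ₀, ∀ c : ℝ,
      1 < |c| →
      C * Real.log (2 / δ - 1) ≤ (gdelta θ₀ θc δ c - θc * c) ^ 2 := by
  have hθc : 0 < θc := hθ₀.trans hθ
  set M := max 1 (6 * θc / θ₀) with hM
  have hM1 : (1:ℝ) ≤ M := le_max_left _ _
  have hexp : (0:ℝ) < Real.exp M + 1 := by positivity
  set δ₀ := min (θ₀ / (2 * θc)) (2 / (Real.exp M + 1)) with hδ₀def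
  have hδ₀pos : 0 < δ₀ := lt_min (by positivity) (by positivity)
  have hδ₀lt1 : δ₀ < 1 := by
    have h1 : (1:ℝ) + 1 ≤ Real.exp 1 := Real.add_one_le_exp 1
    have h2 : Real.exp 1 ≤ Real.exp M := Real.exp_le_exp.2 hM1
    have h3 : (3:ℝ) ≤ Real.exp M + 1 := by linarith
    have : δ₀ ≤ 2 / (Real.exp M + 1) := min_le_right _ _
    have h4 : 2 / (Real.exp M + 1) ≤ 2 / 3 :=
      div_le_div_of_nonneg_left (by norm_num) (by norm_num) h3
    linarith
  refine ⟨δ₀, ⟨hδ₀pos, hδ₀lt1⟩, (θ₀ / 4) ^ 2, by positivity, ?_⟩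
  rintro δ ⟨hδ0, hδlt⟩ c hc
  have hδ1 : δ < 1 := hδlt.trans hδ₀lt1
  have hδ2 : 2 * δ * θc < θ₀ := by
    have h1 : δ < θ₀ / (2 * θc) := hδlt.trans_le (min_le_left _ _)
    have h2 : δ * (2 * θc) < θ₀ := (lt_div_iff₀ (by positivity)).1 h1
    linarith
  have hLM : M ≤ Real.log (2 / δ - 1) := by
    have h1 : δ < 2 / (Real.exp M + 1) := hδlt.trans_le (min_le_right _ _)
    have h2 : δ * (Real.exp M + 1) < 2 := (lt_div_iff₀ hexp).1 h1
    have h3 : Real.exp M + 1 < 2 / δ := (lt_div_iff₀ hδ0).2 (by linarith [mul_comm δ (Real.exp M + 1)])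
    have h4 : (0:ℝ) < 2 / δ - 1 := by linarith [Real.exp_pos M]
    rw [Real.le_log_iff_exp_le h4]
    linarith
  have hL1 : 1 ≤ Real.log (2 / δ - 1) := hM1.trans hLM
  have hL6 : 6 * θc / θ₀ ≤ Real.log (2 / δ - 1) := (le_max_right _ _).trans hLM
  set L := Real.log (2 / δ - 1) with hLdef
  have sq_step : ∀ y : ℝ, θ₀ / 4 * L ≤ y → (θ₀ / 4) ^ 2 * L ≤ y ^ 2 := by
    intro y hy
    have hpos : 0 < θ₀ / 4 * L := by nlinarith
    have h7 : (θ₀ / 4 * L) * (θ₀ / 4 * L) ≤ y * y := mul_self_le_mul_self hpos.le hy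
    nlinarith [mul_nonneg (mul_nonneg (sq_nonneg (θ₀ / 4)) (by linarith : (0:ℝ) ≤ L))
      (by linarith : (0:ℝ) ≤ L - 1)]
  rcases le_or_gt 0 c with h | h
  · have hc1 : 1 < c := by rwa [abs_of_nonneg h] at hc
    have hk := key θ₀ θc δ c hθ₀ hθ hδ0 hδ1 hδ2 hL6 hc1
    have hg : gdelta θ₀ θc δ c = gdeltaAux θ₀ θc δ c := if_pos h
    rw [hg]
    exact sq_step _ hk
  · have hc1 : 1 < -c := by rwa [abs_of_neg h] at hc
    have hk := key θ₀ θc δ (-c) hθ₀ hθ hδ0 hδ1 hδ2 hL6 hc1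
    have hg : gdelta θ₀ θc δ c = -gdeltaAux θ₀ θc δ (-c) := if_neg (not_le.2 h)
    rw [hg]
    have : (-gdeltaAux θ₀ θc δ (-c) - θc * c) ^ 2
        = (gdeltaAux θ₀ θc δ (-c) - θc * (-c)) ^ 2 := by ring
    rw [this]
    exact sq_step _ hk
end

section
/- Let θ₀, θ_c be real numbers with 0 < θ₀ < θ_c and let c* = 1 − 2/(1 + exp(2θ_c/θ₀)). Then θ_c·(1 − c*) > 0 and for every c ∈ [c*, 1) one has (θ₀/2)·log((1+c)/(1−c)) − θ_c·c ≥ θ_c·(1 − c*). -/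
open Real Set

/-- with `c* = 1 − 2/(1 + exp(2θc/θ₀))` one has `θc·(1 − c*) > 0`
and `(θ₀/2)·log((1+c)/(1−c)) − θc·c ≥ θc·(1 − c*)` for every `c ∈ [c*, 1)`. -/
theorem flory_huggins_lower_bound (θ₀ θc : ℝ) (hθ₀ : 0 < θ₀) (hθ : θ₀ < θc) :
    0 < θc * (1 - (1 - 2 / (1 + Real.exp (2 * θc / θ₀)))) ∧
    ∀ c ∈ Set.Ico (1 - 2 / (1 + Real.exp (2 * θc / θ₀))) (1:ℝ),
      θc * (1 - (1 - 2 / (1 + Real.exp (2 * θc / θ₀))))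
        ≤ θ₀ / 2 * Real.log ((1 + c) / (1 - c)) - θc * c := by
  have hθc : 0 < θc := hθ₀.trans hθ
  set E := Real.exp (2 * θc / θ₀) with hEdef
  have hu := Real.add_one_le_exp (θc / θ₀)
  set u := Real.exp (θc / θ₀) with hudef
  have hEu : E = u * u := by
    rw [hEdef, hudef, ← Real.exp_add]; congr 1; ring
  have hu2 : θ₀ * (θc / θ₀ + 1) = θc + θ₀ := by field_simp
  have h5 : θ₀ + θc ≤ θ₀ * u := by
    have := mul_le_mul_of_nonneg_left hu hθ₀.le
    rw [hu2] at this; linarith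
  have h4t : 4 * θc ≤ θ₀ * (1 + E) := by
    rw [hEu]
    nlinarith [sq_nonneg (θ₀ * u - θ₀ - θc), sq_nonneg (θ₀ - θc), sq_nonneg u]
  have hE1 : 1 < E := by
    rw [hEdef]
    have h0 : (0:ℝ) < 2 * θc / θ₀ := by positivity
    linarith [Real.add_one_le_exp (2 * θc / θ₀)]
  have hEpos : (0:ℝ) < 1 + E := by linarith
  set s := 2 / (1 + E) with hsdef
  have hs0 : 0 < s := by positivity
  have hs1 : s < 1 := by
    rw [hsdef, div_lt_one hEpos]; linarith
  have hs2 : 2 - s = s * E := by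
    rw [hsdef]; field_simp; ring
  have h3 : θc ≤ θ₀ / (2 * s) := by
    have : θ₀ / (2 * s) = θ₀ * (1 + E) / 4 := by
      rw [hsdef]; field_simp; ring
    rw [this]; linarith
  constructor
  · have : 1 - (1 - s) = s := by ring
    rw [this]; exact mul_pos hθc hs0
  · intro c hc
    obtain ⟨hc1, hc2⟩ := hc
    have hc0 : 0 < c := by linarith
    have h1cpos : (0:ℝ) < 1 + c := by linarith
    have h1cpos' : (0:ℝ) < 1 - c := by linarith
    have hls : Real.log E = 2 * θc / θ₀ := Real.log_exp _
    have hlog2s : Real.log (2 - s) = Real.log s + 2 * θc / θ₀ := by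
      rw [hs2, Real.log_mul (ne_of_gt hs0) (by linarith), hls]
    have h1 : Real.log (2 - s) ≤ Real.log (1 + c) := by
      apply Real.log_le_log (by linarith) (by linarith)
    have h2 : Real.log (1 - c) - Real.log s ≤ (1 - c) / s - 1 := by
      have h := Real.log_le_sub_one_of_pos (show (0:ℝ) < (1 - c) / s by positivity)
      rwa [Real.log_div (by linarith) (ne_of_gt hs0)] at h
    rw [Real.log_div (by linarith) (by linarith)]
    have hL : 2 * θc / θ₀ + 1 - (1 - c) / s ≤ Real.log (1 + c) - Real.log (1 - c) := by
      linarith [hlog2s ▸ h1]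
    have hmul := mul_le_mul_of_nonneg_left hL (by positivity : (0:ℝ) ≤ θ₀ / 2)
    have heq : θ₀ / 2 * (2 * θc / θ₀ + 1 - (1 - c) / s)
        = θc + θ₀ / (2 * s) * (c - 1 + s) := by
      field_simp; ring
    have hd : 0 ≤ c - 1 + s := by linarith
    have hfin : θc * (c - 1 + s) ≤ θ₀ / (2 * s) * (c - 1 + s) :=
      mul_le_mul_of_nonneg_right h3 hd
    rw [heq] at hmul
    have : 1 - (1 - s) = s := by ring
    rw [this]
    nlinarith [hmul, hfin]
end

section
/- For all real numbers θ₀, θ_c with 0 < θ₀ < θ_c, one has 1 − 2/(1 + exp(2θ_c/θ₀)) ≥ √(1 − θ₀/θ_c); equivalently, tanh(θ_c/θ₀) ≥ √(1 − θ₀/θ_c). -/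
open Real Set

/-- `1 − 2/(1 + exp(2θc/θ₀)) ≥ √(1 − θ₀/θc)`; equivalently,
`tanh(θc/θ₀) ≥ √(1 − θ₀/θc)`. -/
theorem cstar_ge_sqrt (θ₀ θc : ℝ) (hθ₀ : 0 < θ₀) (hθ : θ₀ < θc) :
    Real.sqrt (1 - θ₀ / θc) ≤ 1 - 2 / (1 + Real.exp (2 * θc / θ₀)) ∧
    Real.sqrt (1 - θ₀ / θc) ≤ Real.tanh (θc / θ₀) := by
  have hθc : 0 < θc := hθ₀.trans hθ
  set t : ℝ := θc / θ₀ with ht_def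
  have ht : 1 < t := (one_lt_div hθ₀).2 hθ
  have ht0 : 0 < t := lt_trans one_pos ht
  -- cosh t > t
  have hcosh_gt : t < Real.cosh t := by
    have hhalf : Real.exp t = Real.exp (t / 2) * Real.exp (t / 2) := by
      rw [← Real.exp_add]; ring_nf
    have h1 : 2 * t < Real.exp t := by
      rw [hhalf]
      nlinarith [Real.add_one_lt_exp (by positivity : t / 2 ≠ 0), Real.exp_pos (t / 2), sq_nonneg (t / 2 - 1)]
    have h2 : Real.exp t / 2 ≤ Real.cosh t := by
      rw [Real.cosh_eq]
      have := (Real.exp_pos (-t)).le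
      linarith
    linarith
  have hcosh_pos : 0 < Real.cosh t := Real.cosh_pos t
  have hcosh_sq : t < Real.cosh t ^ 2 := by
    nlinarith [Real.one_le_cosh t]
  -- tanh nonneg
  have htanh_nonneg : 0 ≤ Real.tanh t := by
    rw [Real.tanh_eq_sinh_div_cosh]
    exact div_nonneg ((Real.sinh_nonneg_iff.2 ht0.le)) hcosh_pos.le
  have hfrac : 1 - θ₀ / θc = 1 - 1 / t := by
    rw [ht_def, one_div_div]
  have hkey : Real.sqrt (1 - θ₀ / θc) ≤ Real.tanh t := by
    rw [hfrac]
    have h3 : 1 - 1 / t ≤ Real.tanh t ^ 2 := by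
      have := Real.tanh_eq_sinh_div_cosh t
      have hsc : Real.cosh t ^ 2 - Real.sinh t ^ 2 = 1 := Real.cosh_sq_sub_sinh_sq t
      rw [this, div_pow]
      rw [le_div_iff₀ (by positivity)]
      have h1t : 1 / t < 1 := by rw [div_lt_one ht0]; exact ht
      have hinv : (1 : ℝ) < 1 / t * Real.cosh t ^ 2 := by
        rw [one_div, inv_mul_eq_div, lt_div_iff₀ ht0]
        linarith
      nlinarith
    calc Real.sqrt (1 - 1 / t) ≤ Real.sqrt (Real.tanh t ^ 2) := Real.sqrt_le_sqrt h3
      _ = |Real.tanh t| := Real.sqrt_sq_eq_abs _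
      _ = Real.tanh t := abs_of_nonneg htanh_nonneg
  have heq : Real.tanh t = 1 - 2 / (1 + Real.exp (2 * θc / θ₀)) := by
    have h2t : 2 * θc / θ₀ = t + t := by rw [ht_def]; ring
    rw [h2t, Real.exp_add, Real.tanh_eq_sinh_div_cosh, Real.sinh_eq, Real.cosh_eq,
      Real.exp_neg]
    have he : 0 < Real.exp t := Real.exp_pos t
    field_simp
    ring
  exact ⟨heq ▸ hkey, hkey⟩
end

section
/- Let γ ≥ 1 be a real number and let T : [0,∞) → ℝ be nondecreasing and 1-Lipschitz (|T(x) − T(y)| ≤ |x − y| for all x, y ≥ 0). Then for all real a, b ≥ 0, (a^γ − b^γ)·(T(a) − T(b)) ≥ |T(a) − T(b)|^(γ+1). -/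
open Real Set

lemma rpow_superadd {γ : ℝ} (hγ : 1 ≤ γ) {x y : ℝ} (hx : 0 ≤ x) (hy : 0 ≤ y) :
    x ^ γ + y ^ γ ≤ (x + y) ^ γ := by
  rcases eq_or_lt_of_le (add_nonneg hx hy) with h | h
  · have hx0 : x = 0 := by linarith [hy, hx]
    have hy0 : y = 0 := by linarith
    simp [hx0, hy0, Real.zero_rpow (by linarith : γ ≠ 0)]
  · set s := x + y with hs
    have hspos : 0 < s := h
    have key : ∀ t : ℝ, 0 ≤ t → t ≤ 1 → t ^ γ ≤ t := by
      intro t ht ht1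
      calc t ^ γ ≤ t ^ (1:ℝ) := Real.rpow_le_rpow_of_exponent_ge' ht ht1 (by norm_num) hγ
        _ = t := Real.rpow_one t
    have hxs : x ^ γ = s ^ γ * (x / s) ^ γ := by
      rw [← Real.mul_rpow hspos.le (by positivity), mul_div_cancel₀ _ hspos.ne']
    have hys : y ^ γ = s ^ γ * (y / s) ^ γ := by
      rw [← Real.mul_rpow hspos.le (by positivity), mul_div_cancel₀ _ hspos.ne']
    have h1 : (x / s) ^ γ ≤ x / s := key _ (by positivity) (by rw [div_le_one hspos]; linarith)
    have h2 : (y / s) ^ γ ≤ y / s := key _ (by positivity) (by rw [div_le_one hspos]; linarith)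
    have hsγ : 0 ≤ s ^ γ := Real.rpow_nonneg hspos.le γ
    calc x ^ γ + y ^ γ = s ^ γ * ((x / s) ^ γ + (y / s) ^ γ) := by rw [hxs, hys]; ring
      _ ≤ s ^ γ * (x / s + y / s) := by nlinarith
      _ = s ^ γ := by field_simp; exact hs.symm

/-- if `γ ≥ 1` and `T : [0,∞) → ℝ` is nondecreasing and
1-Lipschitz, then for all `a, b ≥ 0`,
`(a^γ − b^γ)(T(a) − T(b)) ≥ |T(a) − T(b)|^(γ+1)`. -/
theorem truncation_monotonicity (γ : ℝ) (hγ : 1 ≤ γ) (T : ℝ → ℝ)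
    (hmono : ∀ x y : ℝ, 0 ≤ x → 0 ≤ y → x ≤ y → T x ≤ T y)
    (hlip : ∀ x y : ℝ, 0 ≤ x → 0 ≤ y → |T x - T y| ≤ |x - y|)
    (a b : ℝ) (ha : 0 ≤ a) (hb : 0 ≤ b) :
    |T a - T b| ^ (γ + 1) ≤ (a ^ γ - b ^ γ) * (T a - T b) := by
  wlog hab : b ≤ a with H
  · have := H γ hγ T hmono hlip b a hb ha (le_of_not_ge hab)
    have e1 : |T b - T a| = |T a - T b| := abs_sub_comm _ _
    calc |T a - T b| ^ (γ + 1) = |T b - T a| ^ (γ + 1) := by rw [e1]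
      _ ≤ (b ^ γ - a ^ γ) * (T b - T a) := this
      _ = (a ^ γ - b ^ γ) * (T a - T b) := by ring
  have hT : T b ≤ T a := hmono b a hb ha hab
  have habs : |T a - T b| = T a - T b := abs_of_nonneg (sub_nonneg.2 hT)
  have hle : T a - T b ≤ a - b := by
    have := hlip a b ha hb
    rw [habs, abs_of_nonneg (sub_nonneg.2 hab)] at this; exact this
  have h0 : (0:ℝ) ≤ T a - T b := sub_nonneg.2 hT
  rw [habs, Real.rpow_add_one' (by positivity) (by linarith)]
  refine mul_le_mul_of_nonneg_right ?_ h0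
  calc (T a - T b) ^ γ ≤ (a - b) ^ γ := Real.rpow_le_rpow h0 hle (by linarith)
    _ ≤ a ^ γ - b ^ γ := by
        have h := rpow_superadd hγ (sub_nonneg.2 hab) hb
        rw [sub_add_cancel] at h
        linarith
end
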